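/- arXiv:1212.0791 — 7 statements merged into one kernel-verified Lean document; each statement's English description precedes it below -/
import Mathlib

section
/- Suppose H and L satisfy the Hodge-Riemann bilinear relations (in particular hard Lefschetz). Let V ⊆ H be an L-stable graded subspace with dim V^i = dim V^{-i} for all i. Then V with the restricted form and restricted operator L satisfies the Hodge-Riemann bilinear relations. -/
/-- **Hodge–Riemann relations pass to Lefschetz-stable subspaces.** Suppose `H` (even or
odd, with parity `j`) and `L` satisfy the Hodge–Riemann bilinear relations: there is
`ε = ±1` such that the Lefschetz form `⟨h, L^i h'⟩` is `ε(-1)^{(-i+j)/2}`-definite on each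
primitive subspace `P_L^{-i} = ker L^{i+1} ∩ H^{-i}`.  Let `V ⊆ H` be an `L`-stable graded
subspace with `dim V^i = dim V^{-i}`.  Then `V`, with the restricted form and operator,
satisfies hard Lefschetz and the Hodge–Riemann bilinear relations. -/
theorem hodgeRiemann_subspace
    (V : Type) [AddCommGroup V] [Module ℝ V] [FiniteDimensional ℝ V]
    (p : ℤ → Submodule ℝ V) (hp : DirectSum.IsInternal p)
    (B : V →ₗ[ℝ] V →ₗ[ℝ] ℝ)
    (hsymm : ∀ x y : V, B x y = B y x)
    (hgraded : ∀ i j : ℤ, i + j ≠ 0 → ∀ x ∈ p i, ∀ y ∈ p j, B x y = 0)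
    (hnd : ∀ x : V, (∀ y : V, B x y = 0) → x = 0)
    (L : Module.End ℝ V)
    (hdeg : ∀ i : ℤ, ∀ x ∈ p i, L x ∈ p (i + 2))
    (hadj : ∀ x y : V, B (L x) y = B x (L y))
    -- `H` is even or odd, with parity `j ∈ {0,1}`:
    (j : ℕ)
    (hparity : (j = 0 ∧ ∀ i : ℤ, Odd i → p i = ⊥) ∨ (j = 1 ∧ ∀ i : ℤ, Even i → p i = ⊥))
    -- hard Lefschetz for `H`:
    (hHL : ∀ i : ℕ,
      (∀ x ∈ p (-(i : ℤ)), (L ^ i) x = 0 → x = 0) ∧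
      (∀ y ∈ p (i : ℤ), ∃ x ∈ p (-(i : ℤ)), (L ^ i) x = y))
    -- the Hodge-Riemann bilinear relations for `H`:
    (hHR : ∃ ε : ℝ, (ε = 1 ∨ ε = -1) ∧ ∀ i : ℕ,
      ∀ x ∈ p (-(i : ℤ)) ⊓ LinearMap.ker (L ^ (i + 1)), x ≠ 0 →
        0 < ε * (-1 : ℝ) ^ (((j : ℤ) - (i : ℤ)) / 2) * B x ((L ^ i) x))
    -- an `L`-stable graded subspace with symmetric graded dimensions:
    (S : Submodule ℝ V)
    (hstable : ∀ x ∈ S, L x ∈ S)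
    (hgr : S = ⨆ i : ℤ, S ⊓ p i)
    (hdim : ∀ i : ℤ, Module.finrank ℝ ↥(S ⊓ p i) = Module.finrank ℝ ↥(S ⊓ p (-i))) :
    -- hard Lefschetz for `S`:
    (∀ i : ℕ,
      (∀ x ∈ S ⊓ p (-(i : ℤ)), (L ^ i) x = 0 → x = 0) ∧
      (∀ y ∈ S ⊓ p (i : ℤ), ∃ x ∈ S ⊓ p (-(i : ℤ)), (L ^ i) x = y)) ∧
    -- the Hodge-Riemann bilinear relations for `S` with the restricted form:
    (∃ ε : ℝ, (ε = 1 ∨ ε = -1) ∧ ∀ i : ℕ,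
      ∀ x ∈ S ⊓ p (-(i : ℤ)) ⊓ LinearMap.ker (L ^ (i + 1)), x ≠ 0 →
        0 < ε * (-1 : ℝ) ^ (((j : ℤ) - (i : ℤ)) / 2) * B x ((L ^ i) x)) := by

  have hpow : ∀ (k : ℕ) (i : ℤ) (x : V), x ∈ p i → (L ^ k) x ∈ p (i + 2 * k) := by
    intro k
    induction k with
    | zero => intro i x hx; simpa using hx
    | succ n ih =>
      intro i x hx
      have h1 := hdeg (i + 2 * n) _ (ih i x hx)
      have he : i + 2 * ((n : ℤ) + 1) = (i + 2 * n) + 2 := by ring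
      have hc : ((n + 1 : ℕ) : ℤ) = (n : ℤ) + 1 := by push_cast; ring
      rw [hc, he, pow_succ']
      simpa using h1
  have hSpow : ∀ (k : ℕ) (x : V), x ∈ S → (L ^ k) x ∈ S := by
    intro k
    induction k with
    | zero => intro x hx; simpa using hx
    | succ n ih =>
      intro x hx
      rw [pow_succ']
      exact hstable _ (ih x hx)
  constructor
  · intro i
    constructor
    · intro x hx hx0
      exact (hHL i).1 x hx.2 hx0
    · intro y hy
      have hmap : ∀ x ∈ S ⊓ p (-(i : ℤ)), (L ^ i) x ∈ S ⊓ p (i : ℤ) := by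
        intro x hx
        refine ⟨hSpow i x hx.1, ?_⟩
        have h := hpow i (-(i : ℤ)) x hx.2
        have he : (-(i : ℤ) + 2 * i) = i := by ring
        rwa [he] at h
      let f : ↥(S ⊓ p (-(i : ℤ))) →ₗ[ℝ] ↥(S ⊓ p (i : ℤ)) :=
        ((L ^ i : Module.End ℝ V) ∘ₗ (S ⊓ p (-(i : ℤ))).subtype).codRestrict _
          (fun x => hmap x x.2)
      have hinj : Function.Injective f := by
        intro a b hab
        have h1 : (L ^ i) (a : V) = (L ^ i) (b : V) := congrArg Subtype.val hab
        have h0 : (L ^ i) ((a : V) - (b : V)) = 0 := by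
          rw [map_sub, h1, sub_self]
        have hm : (a : V) - b ∈ p (-(i : ℤ)) := (p _).sub_mem a.2.2 b.2.2
        have := (hHL i).1 _ hm h0
        exact Subtype.ext (sub_eq_zero.mp this)
      have hfr : Module.finrank ℝ ↥(S ⊓ p (-(i : ℤ))) = Module.finrank ℝ ↥(S ⊓ p (i : ℤ)) := by
        have h := hdim (-(i : ℤ))
        rwa [neg_neg] at h
      have hsurj : Function.Surjective f :=
        (LinearMap.injective_iff_surjective_of_finrank_eq_finrank hfr).mp hinj
      obtain ⟨x, hx⟩ := hsurj ⟨y, hy⟩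
      exact ⟨x, x.2, congrArg Subtype.val hx⟩
  · obtain ⟨ε, hε, hHR'⟩ := hHR
    exact ⟨ε, hε, fun i x hx hx0 => hHR' i x ⟨hx.1.2, hx.2⟩ hx0⟩
end

section
/- (Weak Lefschetz substitute) Let φ : V → W(1) be a map of graded ℝ[L]-modules (deg L = 2, V and W graded finite-dimensional real vector spaces) such that: (1) φ is injective in degrees ≤ -1; (2) V and W carry graded bilinear forms with ⟨φ(α), φ(β)⟩_W = ⟨α, Lβ⟩_V for all α, β ∈ V; (3) W (with its form and L) satisfies the Hodge-Riemann bilinear relations. Then L^i : V^{-i} → V^i is injective for all i ≥ 0. -/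
/-- **Weak Lefschetz substitute.** Let `φ : V → W(1)` be a map of graded `ℝ[L]`-modules
(`deg L = 2`) between graded finite-dimensional real vector spaces such that:
(1) `φ` is injective in degrees `≤ -1`;
(2) `V` and `W` carry graded bilinear forms with `⟨φ α, φ β⟩_W = ⟨α, L β⟩_V`;
(3) `W` (with its form and `L`) satisfies the Hodge–Riemann bilinear relations
    (`W` even or odd, hard Lefschetz, and the Lefschetz forms on the primitive
    subspaces alternately definite with a consistent global sign).
Then `L^i : V^{-i} → V^i` is injective for all `i ≥ 0`. -/
theorem weak_lefschetz_substitute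
    (V : Type) [AddCommGroup V] [Module ℝ V] [FiniteDimensional ℝ V]
    (W : Type) [AddCommGroup W] [Module ℝ W] [FiniteDimensional ℝ W]
    (pV : ℤ → Submodule ℝ V) (hpV : DirectSum.IsInternal pV)
    (pW : ℤ → Submodule ℝ W) (hpW : DirectSum.IsInternal pW)
    (LV : Module.End ℝ V) (hdegV : ∀ i : ℤ, ∀ x ∈ pV i, LV x ∈ pV (i + 2))
    (LW : Module.End ℝ W) (hdegW : ∀ i : ℤ, ∀ x ∈ pW i, LW x ∈ pW (i + 2))
    (BV : V →ₗ[ℝ] V →ₗ[ℝ] ℝ)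
    (hgrV : ∀ i j : ℤ, i + j ≠ 0 → ∀ x ∈ pV i, ∀ y ∈ pV j, BV x y = 0)
    (BW : W →ₗ[ℝ] W →ₗ[ℝ] ℝ)
    (hsymmW : ∀ x y : W, BW x y = BW y x)
    (hgrW : ∀ i j : ℤ, i + j ≠ 0 → ∀ x ∈ pW i, ∀ y ∈ pW j, BW x y = 0)
    -- `φ : V → W(1)` is a map of graded `ℝ[L]`-modules:
    (φ : V →ₗ[ℝ] W)
    (hφdeg : ∀ i : ℤ, ∀ x ∈ pV i, φ x ∈ pW (i + 1))
    (hφL : ∀ x : V, φ (LV x) = LW (φ x))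
    -- (1) `φ` is injective in degrees `≤ -1`:
    (hφinj : ∀ i : ℤ, i ≤ -1 → ∀ x ∈ pV i, φ x = 0 → x = 0)
    -- (2) compatibility of the forms:
    (hforms : ∀ α β : V, BW (φ α) (φ β) = BV α (LV β))
    -- (3) `W` satisfies the Hodge-Riemann bilinear relations:
    (jW : ℕ)
    (hparityW : (jW = 0 ∧ ∀ i : ℤ, Odd i → pW i = ⊥) ∨
      (jW = 1 ∧ ∀ i : ℤ, Even i → pW i = ⊥))
    (hHLW : ∀ i : ℕ,
      (∀ x ∈ pW (-(i : ℤ)), (LW ^ i) x = 0 → x = 0) ∧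
      (∀ y ∈ pW (i : ℤ), ∃ x ∈ pW (-(i : ℤ)), (LW ^ i) x = y))
    (hHRW : ∃ ε : ℝ, (ε = 1 ∨ ε = -1) ∧ ∀ i : ℕ,
      ∀ x ∈ pW (-(i : ℤ)) ⊓ LinearMap.ker (LW ^ (i + 1)), x ≠ 0 →
        0 < ε * (-1 : ℝ) ^ (((jW : ℤ) - (i : ℤ)) / 2) * BW x ((LW ^ i) x)) :
    ∀ i : ℕ, ∀ x ∈ pV (-(i : ℤ)), (LV ^ i) x = 0 → x = 0 := by
  obtain ⟨ε, hε, hHR⟩ := hHRW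
  have hcomm : ∀ m : ℕ, ∀ v : V, φ ((LV ^ m) v) = (LW ^ m) (φ v) := by
    intro m
    induction m with
    | zero => simp
    | succ n ih =>
      intro v
      rw [pow_succ', pow_succ']
      simp only [Module.End.mul_apply]
      rw [hφL, ih]
  rintro i x hx hLx
  cases i with
  | zero => simpa using hLx
  | succ n =>
    by_contra hxne
    have hy : φ x ∈ pW (-(n : ℤ)) := by
      have h := hφdeg _ x hx
      have : (-((n + 1 : ℕ) : ℤ)) + 1 = -(n : ℤ) := by push_cast; ring
      rwa [this] at h
    have hker : (LW ^ (n + 1)) (φ x) = 0 := by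
      rw [← hcomm, hLx, map_zero]
    have hyne : φ x ≠ 0 := fun h =>
      hxne (hφinj _ (by push_cast; omega) x hx h)
    have hpos := hHR n (φ x) ⟨hy, LinearMap.mem_ker.mpr hker⟩ hyne
    have hB : BW (φ x) ((LW ^ n) (φ x)) = 0 := by
      rw [← hcomm, hforms]
      have h1 : LV ((LV ^ n) x) = (LV ^ (n + 1)) x := by
        rw [pow_succ', Module.End.mul_apply]
      rw [h1, hLx, map_zero]
    rw [hB] at hpos
    simp at hpos
end

section
/- Let H be a graded finite-dimensional real vector space with a graded symmetric bilinear form ⟨-,-⟩ (not necessarily non-degenerate) and a self-adjoint degree-2 operator L. Suppose there is an integer d > 0 such that L^i : H^{-d-i} → H^{-d+i} is an isomorphism for all i ≥ 0. Then for all i ≥ 0 the Lefschetz form (h, h')_L^{-i} := ⟨h, L^i h'⟩ on H^{-i} is identically zero. -/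
/-- **Vanishing of shifted Lefschetz forms.** Let `H` be a graded finite-dimensional real
vector space with a graded symmetric bilinear form `⟨-,-⟩` (not necessarily
non-degenerate) and a self-adjoint degree-2 operator `L`.  Suppose there is an integer
`d > 0` such that `L^i : H^{-d-i} → H^{-d+i}` is an isomorphism for all `i ≥ 0`.  Then for
all `i ≥ 0` the Lefschetz form `(h,h')_L^{-i} = ⟨h, L^i h'⟩` on `H^{-i}` is identically
zero. -/
theorem shifted_lefschetz_form_vanishes
    (V : Type) [AddCommGroup V] [Module ℝ V] [FiniteDimensional ℝ V]
    (p : ℤ → Submodule ℝ V) (hp : DirectSum.IsInternal p)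
    (B : V →ₗ[ℝ] V →ₗ[ℝ] ℝ)
    (hsymm : ∀ x y : V, B x y = B y x)
    (hgraded : ∀ i j : ℤ, i + j ≠ 0 → ∀ x ∈ p i, ∀ y ∈ p j, B x y = 0)
    (L : Module.End ℝ V)
    (hdeg : ∀ i : ℤ, ∀ x ∈ p i, L x ∈ p (i + 2))
    (hadj : ∀ x y : V, B (L x) y = B x (L y))
    (d : ℤ) (hd : 0 < d)
    (hshiftHL : ∀ i : ℕ,
      (∀ x ∈ p (-d - (i : ℤ)), (L ^ i) x = 0 → x = 0) ∧
      (∀ y ∈ p (-d + (i : ℤ)), ∃ x ∈ p (-d - (i : ℤ)), (L ^ i) x = y)) :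
    ∀ i : ℕ, ∀ x ∈ p (-(i : ℤ)), ∀ y ∈ p (-(i : ℤ)), B x ((L ^ i) y) = 0 := by
  -- membership transport along degree equalities
  have hmem : ∀ {a b : ℤ}, a = b → ∀ z : V, z ∈ p a → z ∈ p b := by
    rintro a b rfl z h; exact h
  -- powers of L shift degree by 2n
  have hpow : ∀ (n : ℕ) (t : ℤ), ∀ z ∈ p t, (L ^ n) z ∈ p (t + 2 * n) := by
    intro n
    induction n with
    | zero => intro t z hz; simpa using hz
    | succ n ih =>
        intro t z hz
        have h1 : L ((L ^ n) z) ∈ p (t + 2 * n + 2) := hdeg _ _ (ih t z hz)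
        have h2 : (L ^ (n + 1)) z = L ((L ^ n) z) := by
          rw [pow_succ']; rfl
        rw [h2]
        exact hmem (by push_cast; ring) _ h1
  -- move powers of L across B
  have Badj : ∀ (n : ℕ) (x y : V), B x ((L ^ n) y) = B ((L ^ n) x) y := by
    intro n
    induction n with
    | zero => intro x y; simp
    | succ n ih =>
        intro x y
        have h2 : ∀ w : V, (L ^ (n + 1)) w = L ((L ^ n) w) := by
          intro w; rw [pow_succ']; rfl
        have h3 : ∀ w : V, (L ^ (n + 1)) w = (L ^ n) (L w) := by
          intro w; rw [pow_succ]; rfl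
        rw [h3, ih, ← hadj, ← h2, h3]
  -- finiteness: p vanishes in low degrees
  have hfin : Set.Finite {t : ℤ | p t ≠ ⊥} :=
    WellFoundedGT.finite_ne_bot_of_iSupIndep hp.submodule_iSupIndep
  obtain ⟨M, hM⟩ : ∃ M : ℤ, ∀ t : ℤ, t < M → p t = ⊥ := by
    obtain ⟨M, hM⟩ := hfin.bddBelow
    exact ⟨M, fun t ht => by
      by_contra h
      exact absurd (hM h) (not_le.mpr ht)⟩
  -- Lefschetz decomposition step
  have hdecomp : ∀ j : ℤ, 0 ≤ j → ∀ x ∈ p (-d - j), ∃ x₀ x₁ : V,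
      x = x₀ + L x₁ ∧ x₀ ∈ p (-d - j) ∧ x₁ ∈ p (-d - j - 2) ∧
      (L ^ (j.toNat + 1)) x₀ = 0 := by
    intro j hj x hx
    set n : ℕ := j.toNat with hn
    have hjn : (n : ℤ) = j := Int.toNat_of_nonneg hj
    have h1 : (L ^ (n + 1)) x ∈ p (-d + ((n : ℤ) + 2)) := by
      have := hpow (n + 1) _ _ hx
      exact hmem (by push_cast; omega) _ this
    obtain ⟨x₁, hx₁, hLx₁⟩ := (hshiftHL (n + 2)).2 ((L ^ (n + 1)) x)
      (hmem (by push_cast; ring) _ h1)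
    refine ⟨x - L x₁, x₁, by abel, ?_, ?_, ?_⟩
    · have h2 : L x₁ ∈ p (-d - ((n : ℤ) + 2) + 2) := hdeg _ _ hx₁
      exact Submodule.sub_mem _ hx (hmem (by omega) _ h2)
    · exact hmem (by push_cast; omega) _ hx₁
    · have h3 : (L ^ (n + 1)) (L x₁) = (L ^ (n + 2)) x₁ := by
        rw [pow_succ]; rfl
      rw [map_sub, h3]
      rw [show ((n : ℕ) + 2) = ((n + 2 : ℕ)) from rfl] at h3
      have : (L ^ (n + 2)) x₁ = (L ^ (n + 1)) x := by
        have := hLx₁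
        convert this using 2 <;> push_cast <;> omega
      rw [this, sub_self]
  -- kill high powers on primitives
  have hkill : ∀ (m n : ℕ) (z : V), m ≤ n → (L ^ m) z = 0 → (L ^ n) z = 0 := by
    intro m n z hmn hz
    have : L ^ n = L ^ (n - m) * L ^ m := by
      rw [← pow_add]; congr 1; omega
    rw [this, Module.End.mul_apply, hz, map_zero]
  -- the key induction
  have key : ∀ m : ℕ, ∀ j k : ℤ, 0 ≤ j → 0 ≤ k →
      2 * (-d - M) + 2 ≤ j + k + m →
      ∀ n : ℕ, 2 * (n : ℤ) = 2 * d + j + k →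
      ∀ x ∈ p (-d - j), ∀ y ∈ p (-d - k), B x ((L ^ n) y) = 0 := by
    intro m
    induction m using Nat.strong_induction_on with
    | _ m IH =>
      intro j k hj hk hm n hn x hx y hy
      by_cases hjM : -d - j < M
      · rw [hM _ hjM, Submodule.mem_bot] at hx
        simp [hx]
      by_cases hkM : -d - k < M
      · rw [hM _ hkM, Submodule.mem_bot] at hy
        simp [hy]
      push_neg at hjM hkM
      have hm2 : 2 ≤ m := by omega
      rcases le_or_gt j k with hjk | hjk
      · -- decompose x
        obtain ⟨x₀, x₁, hxeq, hx₀, hx₁, hprim⟩ := hdecomp j hj x hx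
        have hnbig : j.toNat + 1 ≤ n := by omega
        have t1 : B x₀ ((L ^ n) y) = 0 := by
          rw [Badj, hkill _ n x₀ hnbig hprim]
          simp
        have t2 : B (L x₁) ((L ^ n) y) = 0 := by
          rw [hadj]
          have h3 : L ((L ^ n) y) = (L ^ (n + 1)) y := by
            rw [pow_succ']; rfl
          rw [h3]
          exact IH (m - 2) (by omega) (j + 2) k (by omega) hk (by push_cast; omega)
            (n + 1) (by push_cast; omega) x₁ (hmem (by omega) _ hx₁) y hy
        rw [hxeq, map_add, LinearMap.add_apply, t1, t2, add_zero]
      · -- decompose y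
        obtain ⟨y₀, y₁, hyeq, hy₀, hy₁, hprim⟩ := hdecomp k hk y hy
        have hnbig : k.toNat + 1 ≤ n := by omega
        have t1 : B x ((L ^ n) y₀) = 0 := by
          rw [hkill _ n y₀ hnbig hprim]
          simp
        have t2 : B x ((L ^ n) (L y₁)) = 0 := by
          have h3 : (L ^ n) (L y₁) = (L ^ (n + 1)) y₁ := by
            rw [pow_succ]; rfl
          rw [h3]
          exact IH (m - 2) (by omega) j (k + 2) hj (by omega) (by push_cast; omega)
            (n + 1) (by push_cast; omega) x hx y₁ (hmem (by omega) _ hy₁)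
        rw [hyeq, map_add, map_add, t1, t2, add_zero]
  -- apply key
  have key' : ∀ j k : ℤ, 0 ≤ j → 0 ≤ k →
      ∀ n : ℕ, 2 * (n : ℤ) = 2 * d + j + k →
      ∀ x ∈ p (-d - j), ∀ y ∈ p (-d - k), B x ((L ^ n) y) = 0 := by
    intro j k hj hk n hn x hx y hy
    exact key (2 * (-d - M) + 2 - j - k).toNat j k hj hk (by omega) n hn x hx y hy
  intro i x hx y hy
  rcases le_or_gt d (i : ℤ) with hc | hc
  · exact key' ((i : ℤ) - d) ((i : ℤ) - d) (by omega) (by omega) i (by omega)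
      x (hmem (by omega) _ hx) y (hmem (by omega) _ hy)
  · set e : ℕ := (d - (i : ℤ)).toNat with he
    have hei : (e : ℤ) = d - (i : ℤ) := Int.toNat_of_nonneg (by omega)
    obtain ⟨x', hx', hLx'⟩ := (hshiftHL e).2 x (hmem (by omega) _ hx)
    obtain ⟨y', hy', hLy'⟩ := (hshiftHL e).2 y (hmem (by omega) _ hy)
    have happ : ∀ (a b : ℕ) (w : V), (L ^ a) ((L ^ b) w) = (L ^ (a + b)) w := by
      intro a b w; rw [pow_add]; rfl
    rw [← hLx', ← hLy', happ i e y', ← Badj e, happ e (i + e)]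
    exact key' (e : ℤ) (e : ℤ) (by omega) (by omega) (e + (i + e)) (by push_cast; omega)
      x' hx' y' hy'
end

section
/- (Signature comparison lemma) Let V and W be finite-dimensional graded real vector spaces with graded non-degenerate symmetric forms and Lefschetz operators satisfying hard Lefschetz. Suppose W is even or odd, gdim V = (v + v^{-1})·gdim W (so dim V^{-j} = dim W^{-j+1} + dim W^{-j-1} for all j), and W satisfies the Hodge-Riemann bilinear relations with the standard sign. Then V satisfies the Hodge-Riemann bilinear relations with the standard sign if and only if for all i ≥ 0 the signature of the Lefschetz form on the primitive subspace P^{-i+1} ⊆ W^{-i+1} equals the signature of the Lefschetz form on all of V^{-i} (with P^1 := 0 by convention). -/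
noncomputable def posIndex (V : Type) [AddCommGroup V] [Module ℝ V]
    (B : V →ₗ[ℝ] V →ₗ[ℝ] ℝ) (S : Submodule ℝ V) : ℕ :=
  sSup {n : ℕ | ∃ T : Submodule ℝ V, T ≤ S ∧ Module.finrank ℝ T = n ∧
    ∀ x ∈ T, x ≠ 0 → 0 < B x x}

noncomputable def negIndex (V : Type) [AddCommGroup V] [Module ℝ V]
    (B : V →ₗ[ℝ] V →ₗ[ℝ] ℝ) (S : Submodule ℝ V) : ℕ :=
  sSup {n : ℕ | ∃ T : Submodule ℝ V, T ≤ S ∧ Module.finrank ℝ T = n ∧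
    ∀ x ∈ T, x ≠ 0 → B x x < 0}

/-- The signature of the bilinear form `B` restricted to the subspace `S`. -/
noncomputable def signature (V : Type) [AddCommGroup V] [Module ℝ V]
    (B : V →ₗ[ℝ] V →ₗ[ℝ] ℝ) (S : Submodule ℝ V) : ℤ :=
  (posIndex V B S : ℤ) - (negIndex V B S : ℤ)

set_option linter.unusedSectionVars false
set_option linter.unusedVariables false
set_option maxHeartbeats 2000000

namespace SigCmp
open Module

variable {V : Type} [AddCommGroup V] [Module ℝ V] [FiniteDimensional ℝ V]

def posSet (B : V →ₗ[ℝ] V →ₗ[ℝ] ℝ) (S : Submodule ℝ V) : Set ℕ :=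
  {n : ℕ | ∃ T : Submodule ℝ V, T ≤ S ∧ Module.finrank ℝ T = n ∧
    ∀ x ∈ T, x ≠ 0 → 0 < B x x}

lemma posIndex_eq (B : V →ₗ[ℝ] V →ₗ[ℝ] ℝ) (S : Submodule ℝ V) :
    posIndex V B S = sSup (posSet B S) := rfl

lemma negIndex_eq (B : V →ₗ[ℝ] V →ₗ[ℝ] ℝ) (S : Submodule ℝ V) :
    negIndex V B S = posIndex V (-B) S := by
  unfold negIndex posIndex
  congr 1
  ext n
  constructor
  · rintro ⟨T, h1, h2, h3⟩
    exact ⟨T, h1, h2, fun x hx hx0 => by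
      have := h3 x hx hx0; simp only [LinearMap.neg_apply]; linarith⟩
  · rintro ⟨T, h1, h2, h3⟩
    exact ⟨T, h1, h2, fun x hx hx0 => by
      have := h3 x hx hx0; simp only [LinearMap.neg_apply] at this; linarith⟩

lemma zero_mem_posSet (B : V →ₗ[ℝ] V →ₗ[ℝ] ℝ) (S : Submodule ℝ V) :
    0 ∈ posSet B S :=
  ⟨⊥, bot_le, finrank_bot ℝ V, fun x hx hx0 => absurd (Submodule.mem_bot ℝ |>.mp hx) hx0⟩

lemma posSet_le (B : V →ₗ[ℝ] V →ₗ[ℝ] ℝ) (S : Submodule ℝ V) {n : ℕ}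
    (hn : n ∈ posSet B S) : n ≤ finrank ℝ S := by
  obtain ⟨T, h1, h2, -⟩ := hn
  exact h2 ▸ Submodule.finrank_mono h1

lemma posSet_bddAbove (B : V →ₗ[ℝ] V →ₗ[ℝ] ℝ) (S : Submodule ℝ V) :
    BddAbove (posSet B S) :=
  ⟨finrank ℝ S, fun _ h => posSet_le B S h⟩

lemma posIndex_le_finrank (B : V →ₗ[ℝ] V →ₗ[ℝ] ℝ) (S : Submodule ℝ V) :
    posIndex V B S ≤ finrank ℝ S :=
  csSup_le ⟨0, zero_mem_posSet B S⟩ fun _ h => posSet_le B S h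

lemma posIndex_mem (B : V →ₗ[ℝ] V →ₗ[ℝ] ℝ) (S : Submodule ℝ V) :
    posIndex V B S ∈ posSet B S :=
  Nat.sSup_mem ⟨0, zero_mem_posSet B S⟩ (posSet_bddAbove B S)

lemma le_posIndex (B : V →ₗ[ℝ] V →ₗ[ℝ] ℝ) (S : Submodule ℝ V) {n : ℕ}
    (hn : n ∈ posSet B S) : n ≤ posIndex V B S :=
  le_csSup (posSet_bddAbove B S) hn

lemma posIndex_eq_zero (B : V →ₗ[ℝ] V →ₗ[ℝ] ℝ) (S : Submodule ℝ V)
    (h : ∀ x ∈ S, x ≠ 0 → ¬ (0 < B x x)) : posIndex V B S = 0 := by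
  refine Nat.le_zero.mp (csSup_le ⟨0, zero_mem_posSet B S⟩ ?_)
  rintro n ⟨T, h1, h2, h3⟩
  rcases Nat.eq_zero_or_pos n with h0 | h0
  · omega
  · exfalso
    have hTb : T ≠ ⊥ := by
      rintro rfl
      rw [finrank_bot] at h2; omega
    obtain ⟨x, hxT, hx0⟩ := Submodule.exists_mem_ne_zero_of_ne_bot hTb
    exact h x (h1 hxT) hx0 (h3 x hxT hx0)

lemma posIndex_of_posDef (B : V →ₗ[ℝ] V →ₗ[ℝ] ℝ) (S : Submodule ℝ V)
    (h : ∀ x ∈ S, x ≠ 0 → 0 < B x x) : posIndex V B S = finrank ℝ S :=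
  le_antisymm (posIndex_le_finrank B S) (le_posIndex B S ⟨S, le_rfl, rfl, h⟩)

lemma signature_of_posDef (B : V →ₗ[ℝ] V →ₗ[ℝ] ℝ) (S : Submodule ℝ V)
    (h : ∀ x ∈ S, x ≠ 0 → 0 < B x x) : signature V B S = (finrank ℝ S : ℤ) := by
  unfold signature
  rw [posIndex_of_posDef B S h, negIndex_eq,
    posIndex_eq_zero (-B) S (fun x hx hx0 => by
      have := h x hx hx0; simp only [LinearMap.neg_apply]; intro h'; linarith)]
  simp

lemma signature_neg (B : V →ₗ[ℝ] V →ₗ[ℝ] ℝ) (S : Submodule ℝ V) :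
    signature V (-B) S = - signature V B S := by
  unfold signature
  rw [negIndex_eq, negIndex_eq, show - -B = B from neg_neg B]
  ring

lemma signature_of_negDef (B : V →ₗ[ℝ] V →ₗ[ℝ] ℝ) (S : Submodule ℝ V)
    (h : ∀ x ∈ S, x ≠ 0 → B x x < 0) : signature V B S = -(finrank ℝ S : ℤ) := by
  have := signature_of_posDef (-B) S (fun x hx hx0 => by
    have := h x hx hx0; simp only [LinearMap.neg_apply]; linarith)
  rw [signature_neg] at this
  omega

lemma posDef_of_signature (B : V →ₗ[ℝ] V →ₗ[ℝ] ℝ) (S : Submodule ℝ V)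
    (h : signature V B S = (finrank ℝ S : ℤ)) : ∀ x ∈ S, x ≠ 0 → 0 < B x x := by
  unfold signature at h
  have h1 : posIndex V B S = finrank ℝ S := by
    have := posIndex_le_finrank B S
    omega
  obtain ⟨T, hT, hTr, hTpos⟩ := posIndex_mem B S
  rw [h1] at hTr
  have : T = S := Submodule.eq_of_le_of_finrank_le hT (le_of_eq hTr.symm)
  subst this
  exact hTpos

lemma negDef_of_signature (B : V →ₗ[ℝ] V →ₗ[ℝ] ℝ) (S : Submodule ℝ V)
    (h : signature V B S = -(finrank ℝ S : ℤ)) : ∀ x ∈ S, x ≠ 0 → B x x < 0 := by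
  have h' : signature V (-B) S = (finrank ℝ S : ℤ) := by rw [signature_neg]; omega
  intro x hx hx0
  have := posDef_of_signature (-B) S h' x hx hx0
  simp only [LinearMap.neg_apply] at this
  linarith

lemma posIndex_bot (B : V →ₗ[ℝ] V →ₗ[ℝ] ℝ) : posIndex V B (⊥ : Submodule ℝ V) = 0 := by
  have := posIndex_le_finrank B (⊥ : Submodule ℝ V)
  rw [finrank_bot] at this
  omega

lemma signature_bot (B : V →ₗ[ℝ] V →ₗ[ℝ] ℝ) : signature V B (⊥ : Submodule ℝ V) = 0 := by
  unfold signature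
  rw [posIndex_bot, negIndex_eq, posIndex_bot]
  ring

lemma sig_of_def (B : V →ₗ[ℝ] V →ₗ[ℝ] ℝ) (S : Submodule ℝ V) (ε : ℤ)
    (hε : ε = 1 ∨ ε = -1) (h : ∀ x ∈ S, x ≠ 0 → 0 < (ε : ℝ) * B x x) :
    signature V B S = ε * (finrank ℝ S : ℤ) := by
  rcases hε with rfl | rfl
  · rw [signature_of_posDef B S (fun x hx h0 => by have := h x hx h0; push_cast at this; linarith)]
    ring
  · rw [signature_of_negDef B S (fun x hx h0 => by have := h x hx h0; push_cast at this; linarith)]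
    ring

lemma def_of_sig (B : V →ₗ[ℝ] V →ₗ[ℝ] ℝ) (S : Submodule ℝ V) (ε : ℤ)
    (hε : ε = 1 ∨ ε = -1) (h : signature V B S = ε * (finrank ℝ S : ℤ)) :
    ∀ x ∈ S, x ≠ 0 → 0 < (ε : ℝ) * B x x := by
  rcases hε with rfl | rfl
  · intro x hx h0
    have := posDef_of_signature B S (by rw [h]; ring) x hx h0
    push_cast
    linarith
  · intro x hx h0
    have := negDef_of_signature B S (by rw [h]; ring) x hx h0
    push_cast
    linarith

lemma finrank_map_of_injOn (f : V →ₗ[ℝ] V) (S : Submodule ℝ V)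
    (hinj : ∀ x ∈ S, f x = 0 → x = 0) :
    finrank ℝ (S.map f) = finrank ℝ S := by
  have hi : Function.Injective (f.domRestrict S) := by
    rw [LinearMap.injective_domRestrict_iff, disjoint_iff, eq_bot_iff]
    rintro x ⟨hxS, hxk⟩
    simpa using hinj x hxS hxk
  have := LinearMap.finrank_range_of_inj hi
  rwa [LinearMap.range_domRestrict S f] at this

lemma posSet_map (B B' : V →ₗ[ℝ] V →ₗ[ℝ] ℝ) (f : V →ₗ[ℝ] V) (S : Submodule ℝ V)
    (hinj : ∀ x ∈ S, f x = 0 → x = 0)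
    (hiso : ∀ x ∈ S, ∀ y ∈ S, B' (f x) (f y) = B x y) :
    posSet B' (S.map f) = posSet B S := by
  ext n
  constructor
  · rintro ⟨T', hT', hrank, hpos⟩
    refine ⟨S ⊓ T'.comap f, inf_le_left, ?_, ?_⟩
    · have hmap : (S ⊓ T'.comap f).map f = T' := by
        apply le_antisymm
        · rintro y ⟨x, ⟨hxS, hxT⟩, rfl⟩
          exact hxT
        · intro y hy
          obtain ⟨x, hxS, rfl⟩ := hT' hy
          exact ⟨x, ⟨hxS, hy⟩, rfl⟩
      have heq := finrank_map_of_injOn f (S ⊓ T'.comap f)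
        (fun x hx h0 => hinj x (Submodule.mem_inf.mp hx).1 h0)
      rw [hmap] at heq
      omega
    · rintro x ⟨hxS, hxT⟩ hx0
      rw [← hiso x hxS x hxS]
      refine hpos (f x) hxT ?_
      intro h0
      exact hx0 (hinj x hxS h0)
  · rintro ⟨T, hT, hrank, hpos⟩
    refine ⟨T.map f, Submodule.map_mono hT, ?_, ?_⟩
    · rw [← hrank]
      exact finrank_map_of_injOn f T (fun x hx h0 => hinj x (hT hx) h0)
    · rintro y ⟨x, hxT, rfl⟩ hy0
      have hx0 : x ≠ 0 := by rintro rfl; simp at hy0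
      rw [hiso x (hT hxT) x (hT hxT)]
      exact hpos x hxT hx0

lemma signature_map (B B' : V →ₗ[ℝ] V →ₗ[ℝ] ℝ) (f : V →ₗ[ℝ] V) (S : Submodule ℝ V)
    (hinj : ∀ x ∈ S, f x = 0 → x = 0)
    (hiso : ∀ x ∈ S, ∀ y ∈ S, B' (f x) (f y) = B x y) :
    signature V B' (S.map f) = signature V B S := by
  unfold signature
  rw [negIndex_eq, negIndex_eq, posIndex_eq, posIndex_eq, posIndex_eq, posIndex_eq,
    posSet_map B B' f S hinj hiso,
    posSet_map (-B) (-B') f S hinj (fun x hx y hy => by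
      simp only [LinearMap.neg_apply, hiso x hx y hy])]

lemma quad_expand {n : ℕ} {M : Type} [AddCommGroup M] [Module ℝ M]
    (Bs : M →ₗ[ℝ] M →ₗ[ℝ] ℝ) (v : Basis (Fin n) ℝ M)
    (hv : ∀ i j : Fin n, i ≠ j → Bs (v i) (v j) = 0) (x : M) :
    Bs x x = ∑ i, (v.repr x i) ^ 2 * Bs (v i) (v i) := by
  have hx : x = ∑ i, v.repr x i • v i := (v.sum_repr x).symm
  calc Bs x x = Bs (∑ i, v.repr x i • v i) (∑ j, v.repr x j • v j) := by rw [← hx]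
    _ = ∑ i, ∑ j, (v.repr x i) * ((v.repr x j) * Bs (v j) (v i)) := by
        rw [map_sum]
        simp only [LinearMap.coe_sum, Finset.sum_apply, map_smul, LinearMap.smul_apply,
          smul_eq_mul, map_sum, Finset.mul_sum]
    _ = ∑ i, (v.repr x i) ^ 2 * Bs (v i) (v i) := by
        refine Finset.sum_congr rfl fun i _ => ?_
        rw [Finset.sum_eq_single i]
        · ring
        · intro j _ hj
          rw [hv j i hj]
          ring
        · intro h
          simp at h

lemma exists_negSemidef (B : V →ₗ[ℝ] V →ₗ[ℝ] ℝ) (hsymm : ∀ x y : V, B x y = B y x)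
    (S : Submodule ℝ V) :
    ∃ U : Submodule ℝ V, U ≤ S ∧ (∀ x ∈ U, B x x ≤ 0) ∧
      finrank ℝ S ≤ posIndex V B S + finrank ℝ U := by
  classical
  set Bs := B.domRestrict₁₂ S S with hBsdef
  have hBsapp : ∀ x y : ↥S, Bs x y = B x y := fun x y => rfl
  have hBs : Bs.IsSymm := by
    refine LinearMap.isSymm_def.mpr fun x y => ?_
    simp only [RingHom.id_apply, hBsapp, hsymm]
  obtain ⟨v, hv⟩ := LinearMap.BilinForm.exists_orthogonal_basis hBs
  have hvo : ∀ i j, i ≠ j → Bs (v i) (v j) = 0 := fun i j hij => hv hij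
  set s : Finset (Fin (finrank ℝ ↥S)) := Finset.univ.filter (fun i => 0 < Bs (v i) (v i))
    with hs
  set A : Submodule ℝ ↥S := Submodule.span ℝ (v '' ↑s) with hA
  set C : Submodule ℝ ↥S := Submodule.span ℝ (v '' ↑(sᶜ)) with hC
  have hsup : A ⊔ C = ⊤ := by
    rw [hA, hC, ← Submodule.span_union, ← Set.image_union]
    have : (↑s ∪ ↑(sᶜ) : Set (Fin (finrank ℝ ↥S))) = Set.univ := by
      ext i; simp
    rw [this, Set.image_univ, Basis.span_eq]
  have hApos : ∀ x ∈ A, x ≠ 0 → 0 < Bs x x := by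
    intro x hx hx0
    have hsupp : ↑(v.repr x).support ⊆ (↑s : Set (Fin (finrank ℝ ↥S))) :=
      (Basis.mem_span_image v).mp hx
    rw [quad_expand Bs v hvo x]
    apply Finset.sum_pos'
    · intro i _
      rcases eq_or_ne (v.repr x i) 0 with h0 | h0
      · rw [h0]; ring_nf; simp
      · have his : i ∈ s := hsupp (Finsupp.mem_support_iff.mpr h0)
        have hd : 0 < Bs (v i) (v i) := (Finset.mem_filter.mp his).2
        positivity
    · have hr0 : v.repr x ≠ 0 := fun h => hx0 (by
        have := congrArg v.repr.symm h
        simpa using this)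
      obtain ⟨i, hi⟩ := Finsupp.ne_iff.mp hr0
      simp only [Finsupp.coe_zero, Pi.zero_apply] at hi
      refine ⟨i, Finset.mem_univ i, ?_⟩
      have his : i ∈ s := hsupp (Finsupp.mem_support_iff.mpr hi)
      have hd : 0 < Bs (v i) (v i) := (Finset.mem_filter.mp his).2
      positivity
  have hCneg : ∀ x ∈ C, Bs x x ≤ 0 := by
    intro x hx
    have hsupp : ↑(v.repr x).support ⊆ (↑(sᶜ) : Set (Fin (finrank ℝ ↥S))) :=
      (Basis.mem_span_image v).mp hx
    rw [quad_expand Bs v hvo x]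
    apply Finset.sum_nonpos
    intro i _
    rcases eq_or_ne (v.repr x i) 0 with h0 | h0
    · rw [h0]; ring_nf; simp
    · have his : i ∈ sᶜ := by
        have := hsupp (Finsupp.mem_support_iff.mpr h0)
        simpa using this
      have hnot : ¬ (0 < Bs (v i) (v i)) := by
        simp only [hs, Finset.mem_compl, Finset.mem_filter, Finset.mem_univ,
          true_and] at his
        exact his
      have hd : Bs (v i) (v i) ≤ 0 := le_of_not_gt hnot
      have h2 : (0:ℝ) ≤ (v.repr x i) ^ 2 := sq_nonneg _
      exact mul_nonpos_of_nonneg_of_nonpos h2 hd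
  refine ⟨C.map S.subtype, ?_, ?_, ?_⟩
  · rintro x ⟨y, hy, rfl⟩; exact y.2
  · rintro x ⟨y, hy, rfl⟩
    exact hCneg y hy
  · have h1 : finrank ℝ (A.map S.subtype) ≤ posIndex V B S := by
      apply le_posIndex
      refine ⟨A.map S.subtype, ?_, rfl, ?_⟩
      · rintro x ⟨y, hy, rfl⟩; exact y.2
      · rintro x ⟨y, hy, rfl⟩ hx0
        have hy0 : y ≠ 0 := by rintro rfl; simp at hx0
        exact hApos y hy hy0
    have h2 : finrank ℝ ↥S ≤ finrank ℝ A + finrank ℝ C := by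
      have := Submodule.finrank_sup_add_finrank_inf_eq A C
      have hle : finrank ℝ ↥(A ⊔ C) ≤ finrank ℝ A + finrank ℝ C := by omega
      rw [hsup] at hle
      rwa [finrank_top] at hle
    have h3 : finrank ℝ (A.map S.subtype) = finrank ℝ A :=
      Submodule.finrank_map_subtype_eq S A
    have h4 : finrank ℝ (C.map S.subtype) = finrank ℝ C :=
      Submodule.finrank_map_subtype_eq S C
    omega

lemma posIndex_sup (B : V →ₗ[ℝ] V →ₗ[ℝ] ℝ) (hsymm : ∀ x y : V, B x y = B y x)
    (S₁ S₂ : Submodule ℝ V) (hdisj : S₁ ⊓ S₂ = ⊥)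
    (horth : ∀ x ∈ S₁, ∀ y ∈ S₂, B x y = 0) :
    posIndex V B (S₁ ⊔ S₂) = posIndex V B S₁ + posIndex V B S₂ := by
  have horth' : ∀ y ∈ S₂, ∀ x ∈ S₁, B y x = 0 := fun y hy x hx =>
    (hsymm y x).trans (horth x hx y hy)
  have key : ∀ a ∈ S₁, ∀ b ∈ S₂, B (a + b) (a + b) = B a a + B b b := by
    intro a ha b hb
    simp only [map_add, LinearMap.add_apply]
    rw [horth a ha b hb, horth' b hb a ha]
    ring
  apply le_antisymm
  · obtain ⟨T, hT, hTr, hTpos⟩ := posIndex_mem B (S₁ ⊔ S₂)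
    obtain ⟨U₁, hU₁S, hU₁neg, hU₁r⟩ := exists_negSemidef B hsymm S₁
    obtain ⟨U₂, hU₂S, hU₂neg, hU₂r⟩ := exists_negSemidef B hsymm S₂
    have hdisjU : U₁ ⊓ U₂ = ⊥ := by
      rw [eq_bot_iff, ← hdisj]
      exact inf_le_inf hU₁S hU₂S
    have hUneg : ∀ x ∈ U₁ ⊔ U₂, B x x ≤ 0 := by
      intro x hx
      obtain ⟨a, ha, b, hb, rfl⟩ := Submodule.mem_sup.mp hx
      rw [key a (hU₁S ha) b (hU₂S hb)]
      have := hU₁neg a ha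
      have := hU₂neg b hb
      linarith
    have hTU : T ⊓ (U₁ ⊔ U₂) = ⊥ := by
      rw [eq_bot_iff]
      rintro x ⟨hxT, hxU⟩
      rw [Submodule.mem_bot]
      by_contra hx0
      have h1 := hTpos x hxT hx0
      have h2 := hUneg x hxU
      linarith
    have hrank1 : finrank ℝ ↥(T ⊔ (U₁ ⊔ U₂)) = finrank ℝ T + finrank ℝ ↥(U₁ ⊔ U₂) := by
      have := Submodule.finrank_sup_add_finrank_inf_eq T (U₁ ⊔ U₂)
      rw [hTU] at this
      simp only [finrank_bot] at this
      omega
    have hrank2 : finrank ℝ ↥(U₁ ⊔ U₂) = finrank ℝ U₁ + finrank ℝ U₂ := by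
      have := Submodule.finrank_sup_add_finrank_inf_eq U₁ U₂
      rw [hdisjU] at this
      simp only [finrank_bot] at this
      omega
    have hle : T ⊔ (U₁ ⊔ U₂) ≤ S₁ ⊔ S₂ :=
      sup_le hT (sup_le (le_trans hU₁S le_sup_left) (le_trans hU₂S le_sup_right))
    have hrank3 : finrank ℝ ↥(T ⊔ (U₁ ⊔ U₂)) ≤ finrank ℝ ↥(S₁ ⊔ S₂) :=
      Submodule.finrank_mono hle
    have hrank4 : finrank ℝ ↥(S₁ ⊔ S₂) ≤ finrank ℝ S₁ + finrank ℝ S₂ := by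
      have := Submodule.finrank_sup_add_finrank_inf_eq S₁ S₂
      omega
    omega
  · obtain ⟨T₁, hT₁, hT₁r, hT₁pos⟩ := posIndex_mem B S₁
    obtain ⟨T₂, hT₂, hT₂r, hT₂pos⟩ := posIndex_mem B S₂
    apply le_posIndex
    refine ⟨T₁ ⊔ T₂, sup_le_sup hT₁ hT₂, ?_, ?_⟩
    · have hdisjT : T₁ ⊓ T₂ = ⊥ := by
        rw [eq_bot_iff, ← hdisj]
        exact inf_le_inf hT₁ hT₂
      have := Submodule.finrank_sup_add_finrank_inf_eq T₁ T₂
      rw [hdisjT] at this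
      simp only [finrank_bot] at this
      omega
    · intro x hx hx0
      obtain ⟨a, ha, b, hb, rfl⟩ := Submodule.mem_sup.mp hx
      rw [key a (hT₁ ha) b (hT₂ hb)]
      have hBa : 0 ≤ B a a := by
        rcases eq_or_ne a 0 with rfl | ha0
        · simp
        · exact le_of_lt (hT₁pos a ha ha0)
      have hBb : 0 ≤ B b b := by
        rcases eq_or_ne b 0 with rfl | hb0
        · simp
        · exact le_of_lt (hT₂pos b hb hb0)
      rcases eq_or_ne a 0 with rfl | ha0
      · have hb0 : b ≠ 0 := by rintro rfl; simp at hx0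
        have := hT₂pos b hb hb0
        linarith
      · have := hT₁pos a ha ha0
        linarith

lemma signature_sup (B : V →ₗ[ℝ] V →ₗ[ℝ] ℝ) (hsymm : ∀ x y : V, B x y = B y x)
    (S₁ S₂ : Submodule ℝ V) (hdisj : S₁ ⊓ S₂ = ⊥)
    (horth : ∀ x ∈ S₁, ∀ y ∈ S₂, B x y = 0) :
    signature V B (S₁ ⊔ S₂) = signature V B S₁ + signature V B S₂ := by
  unfold signature
  rw [negIndex_eq, negIndex_eq, negIndex_eq,
    posIndex_sup B hsymm S₁ S₂ hdisj horth,
    posIndex_sup (-B) (fun x y => by simp only [LinearMap.neg_apply, hsymm x y])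
      S₁ S₂ hdisj (fun x hx y hy => by simp only [LinearMap.neg_apply, horth x hx y hy, neg_zero])]
  push_cast
  ring

end SigCmp

namespace SigCmpG
open Module SigCmp

variable {X : Type} [AddCommGroup X] [Module ℝ X] [FiniteDimensional ℝ X]
variable (p : ℤ → Submodule ℝ X) (B : X →ₗ[ℝ] X →ₗ[ℝ] ℝ) (L : Module.End ℝ X)

lemma pow_comp (k : ℕ) (x : X) : (L ^ (k + 1)) x = (L ^ k) (L x) := by
  rw [pow_succ, Module.End.mul_apply]

lemma pow_comp' (k : ℕ) (x : X) : (L ^ (k + 1)) x = L ((L ^ k) x) := by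
  rw [pow_succ', Module.End.mul_apply]

lemma pow_deg (hdeg : ∀ i : ℤ, ∀ x ∈ p i, L x ∈ p (i + 2)) :
    ∀ k : ℕ, ∀ j : ℤ, ∀ x ∈ p j, (L ^ k) x ∈ p (j + 2 * k) := by
  intro k
  induction k with
  | zero => intro j x hx; simpa using hx
  | succ n ih =>
    intro j x hx
    have h2 := ih (j + 2) (L x) (hdeg j x hx)
    rw [pow_comp L n x]
    have : j + 2 + 2 * (n : ℤ) = j + 2 * ((n : ℕ) + 1 : ℕ) := by push_cast; ring
    rwa [this] at h2

lemma pow_adj (hadj : ∀ x y : X, B (L x) y = B x (L y)) :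
    ∀ k : ℕ, ∀ x y : X, B ((L ^ k) x) y = B x ((L ^ k) y) := by
  intro k
  induction k with
  | zero => intro x y; simp
  | succ n ih =>
    intro x y
    rw [pow_comp L n x, ih (L x) y, hadj, pow_comp' L n y]

lemma compl₂_symm (hsymm : ∀ x y : X, B x y = B y x)
    (hadj : ∀ x y : X, B (L x) y = B x (L y)) (k : ℕ) (x y : X) :
    (B.compl₂ (L ^ k)) x y = (B.compl₂ (L ^ k)) y x := by
  simp only [LinearMap.compl₂_apply]
  rw [← pow_adj B L hadj k x y]
  exact hsymm _ _

section Decomp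

variable (hdeg : ∀ i : ℤ, ∀ x ∈ p i, L x ∈ p (i + 2))
variable (hadj : ∀ x y : X, B (L x) y = B x (L y))
variable (hHL : ∀ i : ℕ,
      (∀ x ∈ p (-(i : ℤ)), (L ^ i) x = 0 → x = 0) ∧
      (∀ y ∈ p (i : ℤ), ∃ x ∈ p (-(i : ℤ)), (L ^ i) x = y))

include hdeg hHL in
lemma decomp_sup (i : ℕ) :
    p (-(i : ℤ)) = (p (-(i : ℤ)) ⊓ LinearMap.ker (L ^ (i + 1))) ⊔
      (p (-((i + 2 : ℕ) : ℤ))).map (L : X →ₗ[ℝ] X) := by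
  apply le_antisymm
  · intro z hz
    have h1 : (L ^ (i + 1)) z ∈ p (((i + 2 : ℕ) : ℤ)) := by
      have h := pow_deg p L hdeg (i + 1) (-(i : ℤ)) z hz
      rwa [show -(i : ℤ) + 2 * ((i + 1 : ℕ) : ℤ) = ((i + 2 : ℕ) : ℤ) by push_cast; ring] at h
    obtain ⟨x, hx, hLx⟩ := (hHL (i + 2)).2 ((L ^ (i + 1)) z) h1
    have hLxm : L x ∈ p (-(i : ℤ)) := by
      have h := hdeg _ x hx
      rwa [show -((i + 2 : ℕ) : ℤ) + 2 = -(i : ℤ) by push_cast; ring] at h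
    have hker : z - L x ∈ LinearMap.ker (L ^ (i + 1)) := by
      rw [LinearMap.mem_ker, map_sub]
      rw [show (L ^ (i + 1)) (L x) = (L ^ (i + 2)) x by
        rw [show i + 2 = (i + 1) + 1 by omega, pow_comp L (i + 1) x]]
      rw [hLx, sub_self]
    exact Submodule.mem_sup.mpr ⟨z - L x, ⟨Submodule.sub_mem _ hz hLxm, hker⟩,
      L x, Submodule.mem_map_of_mem hx, by abel⟩
  · apply sup_le inf_le_left
    rintro y ⟨x, hx, rfl⟩
    have h := hdeg _ x hx
    rwa [show -((i + 2 : ℕ) : ℤ) + 2 = -(i : ℤ) by push_cast; ring] at h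

include hHL in
lemma decomp_disjoint (i : ℕ) :
    (p (-(i : ℤ)) ⊓ LinearMap.ker (L ^ (i + 1))) ⊓
      (p (-((i + 2 : ℕ) : ℤ))).map (L : X →ₗ[ℝ] X) = ⊥ := by
  rw [eq_bot_iff]
  rintro z ⟨⟨-, hzk⟩, x, hx, rfl⟩
  rw [Submodule.mem_bot]
  have h0 : (L ^ (i + 2)) x = 0 := by
    rw [show i + 2 = (i + 1) + 1 by omega, pow_comp L (i + 1) x]
    exact hzk
  rw [(hHL (i + 2)).1 x hx h0, map_zero]

include hadj in
lemma decomp_orth (i : ℕ) :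
    ∀ z ∈ p (-(i : ℤ)) ⊓ LinearMap.ker (L ^ (i + 1)),
    ∀ y ∈ (p (-((i + 2 : ℕ) : ℤ))).map (L : X →ₗ[ℝ] X),
      (B.compl₂ (L ^ i)) z y = 0 := by
  rintro z ⟨-, hzk⟩ y ⟨x, hx, rfl⟩
  simp only [LinearMap.compl₂_apply]
  rw [← pow_comp L i x, ← pow_adj B L hadj, LinearMap.mem_ker.mp hzk, map_zero,
    LinearMap.zero_apply]

include hadj in
lemma decomp_iso (i : ℕ) :
    ∀ x y : X, (B.compl₂ (L ^ i)) (L x) (L y) = (B.compl₂ (L ^ (i + 2))) x y := by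
  intro x y
  simp only [LinearMap.compl₂_apply]
  rw [← pow_comp L i y, hadj, ← pow_comp' L (i + 1) y, show (i + 1) + 1 = i + 2 by omega]

include hHL in
lemma decomp_inj (i : ℕ) : ∀ x ∈ p (-((i + 2 : ℕ) : ℤ)), L x = 0 → x = 0 := by
  intro x hx h0
  apply (hHL (i + 2)).1 x hx
  rw [show i + 2 = (i + 1) + 1 by omega, pow_comp L (i + 1) x, h0, map_zero]

include hdeg hHL in
lemma map_pow_eq (k : ℕ) :
    (p (-(k : ℤ))).map ((L ^ k : Module.End ℝ X) : X →ₗ[ℝ] X) = p ((k : ℤ)) := by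
  apply le_antisymm
  · rintro y ⟨x, hx, rfl⟩
    have h := pow_deg p L hdeg k (-(k : ℤ)) x hx
    rwa [show -(k : ℤ) + 2 * (k : ℤ) = (k : ℤ) by ring] at h
  · intro y hy
    obtain ⟨x, hx, hLx⟩ := (hHL k).2 y hy
    exact ⟨x, hx, hLx⟩

include hdeg hHL in
lemma finrank_pm (k : ℕ) : finrank ℝ (p ((k : ℤ))) = finrank ℝ (p (-(k : ℤ))) := by
  rw [← map_pow_eq p L hdeg hHL k]
  exact finrank_map_of_injOn _ _ (hHL k).1

include hdeg hHL in
lemma finrank_rec (i : ℕ) :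
    finrank ℝ (p (-(i : ℤ))) =
      finrank ℝ ↥(p (-(i : ℤ)) ⊓ LinearMap.ker (L ^ (i + 1))) +
      finrank ℝ (p (-((i + 2 : ℕ) : ℤ))) := by
  conv_lhs => rw [decomp_sup p L hdeg hHL i]
  have h1 := Submodule.finrank_sup_add_finrank_inf_eq
    (p (-(i : ℤ)) ⊓ LinearMap.ker (L ^ (i + 1)))
    ((p (-((i + 2 : ℕ) : ℤ))).map (L : X →ₗ[ℝ] X))
  rw [decomp_disjoint p L hHL i] at h1
  simp only [finrank_bot] at h1
  have h2 := finrank_map_of_injOn (L : X →ₗ[ℝ] X) (p (-((i + 2 : ℕ) : ℤ)))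
    (decomp_inj p L hHL i)
  omega

include hdeg hadj hHL in
lemma sigma_rec (hsymm : ∀ x y : X, B x y = B y x) (i : ℕ) :
    signature X (B.compl₂ (L ^ i)) (p (-(i : ℤ))) =
      signature X (B.compl₂ (L ^ i)) (p (-(i : ℤ)) ⊓ LinearMap.ker (L ^ (i + 1))) +
      signature X (B.compl₂ (L ^ (i + 2))) (p (-((i + 2 : ℕ) : ℤ))) := by
  conv_lhs => rw [decomp_sup p L hdeg hHL i]
  rw [signature_sup (B.compl₂ (L ^ i)) (compl₂_symm B L hsymm hadj i) _ _
    (decomp_disjoint p L hHL i) (decomp_orth p B L hadj i)]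
  congr 1
  rw [signature_map (B.compl₂ (L ^ (i + 2))) (B.compl₂ (L ^ i)) (L : X →ₗ[ℝ] X)
    (p (-((i + 2 : ℕ) : ℤ))) (decomp_inj p L hHL i)
    (fun x _ y _ => decomp_iso B L hadj i x y)]

end Decomp
end SigCmpG

section Eps
open Module

def epsz (ℓ i : ℕ) : ℤ :=
  if Even (((i : ℤ) - ((ℓ : ℤ) + 1)) / 2) then 1 else -1

lemma epsz_cases (ℓ i : ℕ) : epsz ℓ i = 1 ∨ epsz ℓ i = -1 := by
  unfold epsz
  split_ifs <;> simp

lemma epsz_real (ℓ i : ℕ) :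
    (-1 : ℝ) ^ (((i : ℤ) - ((ℓ : ℤ) + 1)) / 2) = ((epsz ℓ i : ℤ) : ℝ) := by
  unfold epsz
  split_ifs with h
  · rw [Even.neg_one_zpow h]; norm_num
  · rw [Odd.neg_one_zpow (Int.not_even_iff_odd.mp h)]; norm_num

lemma epsz_succ (ℓ i : ℕ) : epsz ℓ (i + 2) = - epsz ℓ i := by
  unfold epsz
  have key : (((i + 2 : ℕ) : ℤ) - ((ℓ : ℤ) + 1)) / 2 =
      ((i : ℤ) - ((ℓ : ℤ) + 1)) / 2 + 1 := by
    rw [show ((i + 2 : ℕ) : ℤ) - ((ℓ : ℤ) + 1) = ((i : ℤ) - ((ℓ : ℤ) + 1)) + 1 * 2 by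
      push_cast; ring]
    rw [Int.add_mul_ediv_right _ _ (by norm_num : (2:ℤ) ≠ 0)]
  rw [key]
  by_cases h : Even (((i : ℤ) - ((ℓ : ℤ) + 1)) / 2)
  · rw [if_pos h, if_neg (fun hc => (Int.even_add_one.mp hc) h)]
  · rw [if_neg h, if_pos (Int.even_add_one.mpr h)]
    ring

lemma epsz_W (ℓ k : ℕ) :
    (-1 : ℝ) ^ (((k : ℤ) - (ℓ : ℤ)) / 2) = ((epsz ℓ (k + 1) : ℤ) : ℝ) := by
  rw [← epsz_real]
  congr 2
  push_cast
  ring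

end Eps

open SigCmp SigCmpG in
/-- **Signature comparison lemma.** Let `V` and `W` be finite-dimensional graded real
vector spaces with graded non-degenerate symmetric forms and Lefschetz operators
satisfying hard Lefschetz.  Suppose `W` is even or odd, `gdim V = (v + v⁻¹)·gdim W`,
`-ℓ` is the lowest non-zero degree of `W` and `W` satisfies the Hodge–Riemann bilinear
relations with the standard sign.  Then `V` satisfies the Hodge–Riemann bilinear
relations with the standard sign (for its lowest degree `-(ℓ+1)`) if and only if, for all
`i ≥ 0`, the signature of the Lefschetz form on the primitive subspace
`P^{-i+1} ⊆ W^{-i+1}` equals the signature of the Lefschetz form on all of `V^{-i}`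
(with `P^1 = 0` by convention). -/
theorem signature_comparison
    (V : Type) [AddCommGroup V] [Module ℝ V] [FiniteDimensional ℝ V]
    (W : Type) [AddCommGroup W] [Module ℝ W] [FiniteDimensional ℝ W]
    (pV : ℤ → Submodule ℝ V) (hpV : DirectSum.IsInternal pV)
    (pW : ℤ → Submodule ℝ W) (hpW : DirectSum.IsInternal pW)
    (BV : V →ₗ[ℝ] V →ₗ[ℝ] ℝ) (hsymmV : ∀ x y : V, BV x y = BV y x)
    (hgrV : ∀ i j : ℤ, i + j ≠ 0 → ∀ x ∈ pV i, ∀ y ∈ pV j, BV x y = 0)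
    (hndV : ∀ x : V, (∀ y : V, BV x y = 0) → x = 0)
    (BW : W →ₗ[ℝ] W →ₗ[ℝ] ℝ) (hsymmW : ∀ x y : W, BW x y = BW y x)
    (hgrW : ∀ i j : ℤ, i + j ≠ 0 → ∀ x ∈ pW i, ∀ y ∈ pW j, BW x y = 0)
    (hndW : ∀ x : W, (∀ y : W, BW x y = 0) → x = 0)
    (LV : Module.End ℝ V) (hdegV : ∀ i : ℤ, ∀ x ∈ pV i, LV x ∈ pV (i + 2))
    (hadjV : ∀ x y : V, BV (LV x) y = BV x (LV y))
    (LW : Module.End ℝ W) (hdegW : ∀ i : ℤ, ∀ x ∈ pW i, LW x ∈ pW (i + 2))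
    (hadjW : ∀ x y : W, BW (LW x) y = BW x (LW y))
    -- hard Lefschetz for V and W:
    (hHLV : ∀ i : ℕ,
      (∀ x ∈ pV (-(i : ℤ)), (LV ^ i) x = 0 → x = 0) ∧
      (∀ y ∈ pV (i : ℤ), ∃ x ∈ pV (-(i : ℤ)), (LV ^ i) x = y))
    (hHLW : ∀ i : ℕ,
      (∀ x ∈ pW (-(i : ℤ)), (LW ^ i) x = 0 → x = 0) ∧
      (∀ y ∈ pW (i : ℤ), ∃ x ∈ pW (-(i : ℤ)), (LW ^ i) x = y))
    -- `W` is even or odd: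
    (hparityW : (∀ i : ℤ, Odd i → pW i = ⊥) ∨ (∀ i : ℤ, Even i → pW i = ⊥))
    -- `gdim V = (v + v⁻¹)·gdim W`:
    (hdim : ∀ j : ℤ, Module.finrank ℝ ↥(pV j) =
      Module.finrank ℝ ↥(pW (j + 1)) + Module.finrank ℝ ↥(pW (j - 1)))
    -- `-ℓ` is the lowest non-zero degree of `W`:
    (ℓ : ℕ) (hlow : pW (-(ℓ : ℤ)) ≠ ⊥) (hlow' : ∀ i : ℤ, i < -(ℓ : ℤ) → pW i = ⊥)
    -- `W` satisfies the Hodge-Riemann bilinear relations with the standard sign: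
    (hHRW : ∀ i : ℕ, ∀ x ∈ pW (-(i : ℤ)) ⊓ LinearMap.ker (LW ^ (i + 1)), x ≠ 0 →
      0 < (-1 : ℝ) ^ (((i : ℤ) - (ℓ : ℤ)) / 2) * BW x ((LW ^ i) x)) :
    -- `V` satisfies HR with the standard sign iff the signatures match:
    (∀ i : ℕ, ∀ x ∈ pV (-(i : ℤ)) ⊓ LinearMap.ker (LV ^ (i + 1)), x ≠ 0 →
      0 < (-1 : ℝ) ^ (((i : ℤ) - ((ℓ : ℤ) + 1)) / 2) * BV x ((LV ^ i) x)) ↔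
    (∀ i : ℕ,
      signature V (BV.compl₂ (LV ^ i)) (pV (-(i : ℤ))) =
        if i = 0 then 0
        else signature W (BW.compl₂ (LW ^ (i - 1)))
          (pW (-((i : ℤ) - 1)) ⊓ LinearMap.ker (LW ^ i))) := by
  classical
  have recσV : ∀ i : ℕ,
      signature V (BV.compl₂ (LV ^ i)) (pV (-(i : ℤ))) =
        signature V (BV.compl₂ (LV ^ i)) (pV (-(i : ℤ)) ⊓ LinearMap.ker (LV ^ (i + 1))) +
        signature V (BV.compl₂ (LV ^ (i + 2))) (pV (-((i + 2 : ℕ) : ℤ))) :=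
    fun i => sigma_rec pV BV LV hdegV hadjV hHLV hsymmV i
  have recdV : ∀ i : ℕ,
      Module.finrank ℝ (pV (-(i : ℤ))) =
        Module.finrank ℝ ↥(pV (-(i : ℤ)) ⊓ LinearMap.ker (LV ^ (i + 1))) +
        Module.finrank ℝ (pV (-((i + 2 : ℕ) : ℤ))) :=
    fun i => finrank_rec pV LV hdegV hHLV i
  have recdW : ∀ i : ℕ,
      Module.finrank ℝ (pW (-(i : ℤ))) =
        Module.finrank ℝ ↥(pW (-(i : ℤ)) ⊓ LinearMap.ker (LW ^ (i + 1))) +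
        Module.finrank ℝ (pW (-((i + 2 : ℕ) : ℤ))) :=
    fun i => finrank_rec pW LW hdegW hHLW i
  have hpm1 : Module.finrank ℝ (pW (((1 : ℕ) : ℤ))) = Module.finrank ℝ (pW (-((1 : ℕ) : ℤ))) :=
    finrank_pm pW LW hdegW hHLW 1
  have vanishW : ∀ i : ℕ, ℓ < i → pW (-(i : ℤ)) = ⊥ := fun i hi => hlow' _ (by omega)
  have vanishV : ∀ i : ℕ, ℓ + 2 ≤ i → pV (-(i : ℤ)) = ⊥ := by
    intro i hi
    have h0 : Module.finrank ℝ (pV (-(i : ℤ))) = 0 := by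
      rw [hdim, hlow' (-(i : ℤ) + 1) (by omega), hlow' (-(i : ℤ) - 1) (by omega)]
      simp
    exact Submodule.finrank_eq_zero.mp h0
  have eW : ∀ k : ℕ, ℓ < k → (pW (-(k : ℤ)) ⊓ LinearMap.ker (LW ^ (k + 1))) = ⊥ := by
    intro k hk
    rw [vanishW k hk, bot_inf_eq]
  have hdim' : ∀ k : ℕ, Module.finrank ℝ (pV (-((k + 1 : ℕ) : ℤ))) =
      Module.finrank ℝ (pW (-(k : ℤ))) + Module.finrank ℝ (pW (-((k + 2 : ℕ) : ℤ))) := by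
    intro k
    have h := hdim (-((k + 1 : ℕ) : ℤ))
    rw [show -((k + 1 : ℕ) : ℤ) + 1 = -(k : ℤ) by push_cast; ring,
        show -((k + 1 : ℕ) : ℤ) - 1 = -((k + 2 : ℕ) : ℤ) by push_cast; ring] at h
    exact h
  have hdim0 : Module.finrank ℝ (pV (-((0 : ℕ) : ℤ))) =
      Module.finrank ℝ (pW (-((1 : ℕ) : ℤ))) + Module.finrank ℝ (pW (-((1 : ℕ) : ℤ))) := by
    have h := hdim (-((0 : ℕ) : ℤ))
    rw [show -((0 : ℕ) : ℤ) + 1 = ((1 : ℕ) : ℤ) by norm_num,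
        show -((0 : ℕ) : ℤ) - 1 = -((1 : ℕ) : ℤ) by norm_num] at h
    rw [h, hpm1]
  have τWval : ∀ k : ℕ,
      signature W (BW.compl₂ (LW ^ k)) (pW (-(k : ℤ)) ⊓ LinearMap.ker (LW ^ (k + 1))) =
        epsz ℓ (k + 1) *
          (Module.finrank ℝ ↥(pW (-(k : ℤ)) ⊓ LinearMap.ker (LW ^ (k + 1))) : ℤ) := by
    intro k
    apply sig_of_def _ _ _ (epsz_cases ℓ (k + 1))
    intro x hx hx0
    have h := hHRW k x hx hx0
    rw [epsz_W ℓ k] at h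
    simpa only [LinearMap.compl₂_apply] using h
  have cdim : ∀ k : ℕ,
      Module.finrank ℝ ↥(pV (-((k + 1 : ℕ) : ℤ)) ⊓ LinearMap.ker (LV ^ (k + 1 + 1))) =
        Module.finrank ℝ ↥(pW (-(k : ℤ)) ⊓ LinearMap.ker (LW ^ (k + 1))) +
        Module.finrank ℝ ↥(pW (-((k + 2 : ℕ) : ℤ)) ⊓ LinearMap.ker (LW ^ (k + 2 + 1))) := by
    intro k
    have h1 := recdV (k + 1)
    have h2 := hdim' k
    have h3 := hdim' (k + 2)
    have h4 := recdW k
    have h5 := recdW (k + 2)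
    rw [show k + 1 + 2 = k + 3 by omega] at h1
    rw [show k + 2 + 1 = k + 3 by omega] at h3
    rw [show k + 2 + 2 = k + 4 by omega] at h3 h5
    omega
  have hc0 : Module.finrank ℝ ↥(pV (-((0 : ℕ) : ℤ)) ⊓ LinearMap.ker (LV ^ (0 + 1))) =
      Module.finrank ℝ ↥(pW (-((1 : ℕ) : ℤ)) ⊓ LinearMap.ker (LW ^ 2)) := by
    have a1 := recdV 0
    rw [show 0 + 2 = 2 by omega] at a1
    have a2 := hdim0
    have a3 := hdim' 1
    rw [show 1 + 1 = 2 by omega, show 1 + 2 = 3 by omega] at a3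
    have a4 := recdW 1
    rw [show 1 + 1 = 2 by omega, show 1 + 2 = 3 by omega] at a4
    omega
  constructor
  · intro hHRV
    have τVval : ∀ i : ℕ,
        signature V (BV.compl₂ (LV ^ i)) (pV (-(i : ℤ)) ⊓ LinearMap.ker (LV ^ (i + 1))) =
          epsz ℓ i *
            (Module.finrank ℝ ↥(pV (-(i : ℤ)) ⊓ LinearMap.ker (LV ^ (i + 1))) : ℤ) := by
      intro i
      apply sig_of_def _ _ _ (epsz_cases ℓ i)
      intro x hx hx0
      have h := hHRV i x hx hx0
      rw [epsz_real ℓ i] at h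
      simpa only [LinearMap.compl₂_apply] using h
    have key : ∀ d k : ℕ, ℓ + 2 ≤ k + 1 + d →
        signature V (BV.compl₂ (LV ^ (k + 1))) (pV (-((k + 1 : ℕ) : ℤ))) =
          epsz ℓ (k + 1) *
            (Module.finrank ℝ ↥(pW (-(k : ℤ)) ⊓ LinearMap.ker (LW ^ (k + 1))) : ℤ) := by
      intro d
      induction d with
      | zero =>
        intro k hk
        rw [vanishV (k + 1) (by omega), signature_bot, eW k (by omega)]
        simp
      | succ n ih =>
        intro k hk
        by_cases hk' : ℓ + 2 ≤ k + 1 + n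
        · exact ih k hk'
        · have hF2 := ih (k + 2) (by omega)
          have h1 := recσV (k + 1)
          rw [show k + 1 + 2 = k + 3 by omega] at h1
          rw [show k + 2 + 1 = k + 3 by omega] at hF2
          have h2 := τVval (k + 1)
          have h3 := cdim k
          rw [show k + 2 + 1 = k + 3 by omega] at h3
          have h4 := epsz_succ ℓ (k + 1)
          rw [show k + 1 + 2 = k + 3 by omega] at h4
          rw [h1, h2, hF2, h4, h3]
          push_cast
          ring
    intro i
    by_cases hi0 : i = 0
    · subst hi0
      rw [if_pos rfl]
      have h1 := recσV 0
      rw [show 0 + 2 = 2 by omega] at h1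
      have hF1 := key (ℓ + 2) 1 (by omega)
      rw [show 1 + 1 = 2 by omega] at hF1
      have h2 := τVval 0
      have h4 := epsz_succ ℓ 0
      rw [show 0 + 2 = 2 by omega] at h4
      rw [h1, h2, hF1, h4, hc0]
      push_cast
      ring
    · obtain ⟨k, rfl⟩ : ∃ k, i = k + 1 := ⟨i - 1, by omega⟩
      rw [if_neg hi0]
      have hF := key (ℓ + 2) k (by omega)
      rw [hF, show (k + 1) - 1 = k by omega,
        show (((k + 1 : ℕ) : ℤ) - 1) = (k : ℤ) by push_cast; ring, τWval k]
  · intro hSIG i x hx hx0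
    have hs2 := hSIG (i + 2)
    rw [if_neg (by omega), show (i + 2) - 1 = i + 1 by omega,
      show (((i + 2 : ℕ) : ℤ) - 1) = ((i + 1 : ℕ) : ℤ) by push_cast; ring] at hs2
    have hτW := τWval (i + 1)
    rw [show i + 1 + 1 = i + 2 by omega] at hτW
    rw [hτW] at hs2
    have h1 := recσV i
    have hτV : signature V (BV.compl₂ (LV ^ i))
        (pV (-(i : ℤ)) ⊓ LinearMap.ker (LV ^ (i + 1))) =
        epsz ℓ i *
          (Module.finrank ℝ ↥(pV (-(i : ℤ)) ⊓ LinearMap.ker (LV ^ (i + 1))) : ℤ) := by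
      by_cases hi0 : i = 0
      · subst hi0
        have hs0 := hSIG 0
        rw [if_pos rfl] at hs0
        have h4 := epsz_succ ℓ 0
        rw [show 0 + 2 = 2 by omega] at h4
        rw [show 0 + 2 = 2 by omega, show 0 + 1 = 1 by omega] at hs2 h1
        rw [h4] at hs2
        have e1c : (Module.finrank ℝ ↥(pV (-((0 : ℕ) : ℤ)) ⊓
            LinearMap.ker (LV ^ (0 + 1))) : ℤ) =
            (Module.finrank ℝ ↥(pW (-((1 : ℕ) : ℤ)) ⊓ LinearMap.ker (LW ^ 2)) : ℤ) := by
          exact_mod_cast hc0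
        rw [show (0:ℕ) + 1 = 1 by omega] at e1c
        linear_combination hs0 - h1 - hs2 - (epsz ℓ 0) * e1c
      · obtain ⟨k, rfl⟩ : ∃ k, i = k + 1 := ⟨i - 1, by omega⟩
        have hsk := hSIG (k + 1)
        rw [if_neg (by omega), show (k + 1) - 1 = k by omega,
          show (((k + 1 : ℕ) : ℤ) - 1) = (k : ℤ) by push_cast; ring, τWval k] at hsk
        rw [show k + 1 + 2 = k + 3 by omega, show k + 1 + 1 = k + 2 by omega] at hs2 h1
        have h3 := cdim k
        rw [show k + 2 + 1 = k + 3 by omega] at h3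
        have h4 := epsz_succ ℓ (k + 1)
        rw [show k + 1 + 2 = k + 3 by omega] at h4
        rw [h4] at hs2
        have cc : (Module.finrank ℝ ↥(pV (-((k + 1 : ℕ) : ℤ)) ⊓
            LinearMap.ker (LV ^ (k + 1 + 1))) : ℤ) =
            (Module.finrank ℝ ↥(pW (-(k : ℤ)) ⊓ LinearMap.ker (LW ^ (k + 1))) : ℤ) +
            (Module.finrank ℝ ↥(pW (-((k + 2 : ℕ) : ℤ)) ⊓
              LinearMap.ker (LW ^ (k + 3))) : ℤ) := by
          exact_mod_cast h3
        rw [show k + 1 + 1 = k + 2 by omega] at cc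
        linear_combination hsk - h1 - hs2 - (epsz ℓ (k + 1)) * cc
    have hdef := def_of_sig _ _ _ (epsz_cases ℓ i) hτV x hx hx0
    rw [epsz_real ℓ i]
    simpa only [LinearMap.compl₂_apply] using hdef
end

section
/- Let B be an R-bimodule with an invariant form ⟨-,-⟩_B, free of finite rank as a right R-module, with ⟨-,-⟩_B non-degenerate (inducing an isomorphism B ≅ 𝔻B). Then the induced form ⟨-,-⟩_{BB_s} on B ⊗_R B_s, determined by ⟨α(b),α(b')⟩ = ∂_s⟨b,b'⟩, ⟨α(b),β(b')⟩ = ⟨β(b),α(b')⟩ = ⟨b,b'⟩, ⟨β(b),β(b')⟩ = ⟨b,b'⟩α_s (where α(b) = b⊗c_id, β(b) = b⊗c_s), is non-degenerate. -/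
/-- **Non-degeneracy of the induced form on `B B_s`.**  Let `B` be an `R`-bimodule with
an invariant form `⟨-,-⟩_B`, free of finite rank as a right `R`-module, whose form is
non-degenerate (inducing an isomorphism `B ≅ 𝔻B` onto the right-module dual).  Then the
induced form on `B B_s = B ⊗_R B_s`, determined on the elements `α(b) = b ⊗ c_id` and
`β(b) = b ⊗ c_s` by `⟨α(b),α(b')⟩ = ∂_s⟨b,b'⟩`, `⟨α(b),β(b')⟩ = ⟨β(b),α(b')⟩ = ⟨b,b'⟩`
and `⟨β(b),β(b')⟩ = ⟨b,b'⟩·α_s`, is non-degenerate.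

Here `B B_s` is presented as the module `N`, which is free as a right `R`-module on the
images under `α` and `β` of a basis of `B`; the map `β` is right-`R`-linear while `α`
satisfies `α(r b) = (s r)·α(b) + ∂_s(r)·β(b)` for the right action. -/
theorem induced_form_nondegenerate
    (R : Type) [CommRing R]
    (sact : R ≃+* R) (αs : R) (dem : R → R)
    (hdem : ∀ r : R, αs * dem r = r - sact r)
    (hreg : ∀ a : R, αs * a = 0 → a = 0)
    -- `M` is the bimodule `B` (with its right `R`-module structure), free of finite rank:
    (M : Type) [AddCommGroup M] [Module R M]
    (ι : Type) [Fintype ι] (bM : Module.Basis ι R M)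
    -- the non-degenerate invariant form on `B`:
    (F : M →ₗ[R] M →ₗ[R] R)
    (hFnd : Function.Bijective F)
    -- `N` is the bimodule `B B_s` with its right `R`-module structure:
    (N : Type) [AddCommGroup N] [Module R N]
    -- `A = α` and `Bβ = β`:
    (A : M →+ N) (Bβ : M →ₗ[R] N)
    (hA : ∀ (r : R) (m : M), A (r • m) = sact r • A m + dem r • Bβ m)
    -- `N` is free on the images of the basis of `M` under `α` and `β`:
    (bN : Module.Basis (ι ⊕ ι) R N)
    (hbN : ∀ i : ι, bN (Sum.inl i) = A (bM i) ∧ bN (Sum.inr i) = Bβ (bM i))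
    -- the induced form:
    (G : N →ₗ[R] N →ₗ[R] R)
    (hGAA : ∀ m m' : M, G (A m) (A m') = dem (F m m'))
    (hGAB : ∀ m m' : M, G (A m) (Bβ m') = F m m')
    (hGBA : ∀ m m' : M, G (Bβ m) (A m') = F m m')
    (hGBB : ∀ m m' : M, G (Bβ m) (Bβ m') = F m m' * αs) :
    Function.Bijective G := by
  classical
  -- cancellation by αs
  have hreg1 : ∀ a b : R, αs * a = αs * b → a = b := by
    intro a b h
    have h0 : αs * (a - b) = 0 := by rw [mul_sub, h, sub_self]
    exact sub_eq_zero.mp (hreg _ h0)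
  have hregpow : ∀ (k : ℕ) (a b : R), αs ^ k * a = αs ^ k * b → a = b := by
    intro k
    induction k with
    | zero => intro a b h; simpa using h
    | succ k ih =>
      intro a b h
      apply ih
      apply hreg1
      rw [← mul_assoc, ← pow_succ', h, ← mul_assoc, pow_succ']
  -- the Gram matrices
  set Φ : Matrix ι ι R := Matrix.of fun i j => F (bM i) (bM j) with hΦ
  set D : Matrix ι ι R := Matrix.of fun i j => dem (F (bM i) (bM j)) with hD
  set Q : Matrix (ι ⊕ ι) (ι ⊕ ι) R := Matrix.fromBlocks D Φ Φ (αs • Φ) with hQdef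
  have hQ : ∀ p q, Q p q = G (bN p) (bN q) := by
    rintro (i | i) (j | j) <;>
      simp [hQdef, hΦ, hD, (hbN i).1, (hbN i).2, (hbN j).1, (hbN j).2,
        Matrix.fromBlocks, hGAA, hGAB, hGBA, hGBB, mul_comm]
  -- Φ has unit determinant
  have hΦunit : IsUnit Φ.det := by
    have h := LinearEquiv.isUnit_det (LinearEquiv.ofBijective F hFnd) bM bM.dualBasis
    have hmat : (LinearMap.toMatrix bM bM.dualBasis
        ((LinearEquiv.ofBijective F hFnd : M ≃ₗ[R] Module.Dual R M) :
          M →ₗ[R] Module.Dual R M)) = Matrix.transpose Φ := by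
      ext i j
      rw [LinearMap.toMatrix_apply]
      simp [hΦ, Matrix.transpose_apply]
    rw [hmat, Matrix.det_transpose] at h
    exact h
  -- the block-matrix determinant computation
  set n := Fintype.card ι with hn
  have key : αs ^ n * Q.det = αs ^ n * ((-1) ^ n * sact Φ.det * Φ.det) := by
    have hLS :
        (Matrix.fromBlocks (1 : Matrix ι ι R) (-1) 0 1) *
            ((Matrix.fromBlocks (αs • (1 : Matrix ι ι R)) 0 0 1) * Q) =
          Matrix.fromBlocks (αs • D - Φ) 0 Φ (αs • Φ) := by
      rw [hQdef, Matrix.fromBlocks_multiply, Matrix.fromBlocks_multiply]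
      congr 1 <;> simp [Matrix.smul_mul, sub_eq_add_neg] <;> ring_nf
    have hsub : αs • D - Φ = -(Φ.map sact) := by
      ext i j
      have := hdem (F (bM i) (bM j))
      simp only [Matrix.sub_apply, Matrix.smul_apply, Matrix.neg_apply, Matrix.map_apply,
        hD, hΦ, Matrix.of_apply, smul_eq_mul]
      rw [this]; ring
    have hmap : (Φ.map ⇑sact).det = sact Φ.det := ((sact : R ≃+* R).map_det Φ).symm
    have hdet1 := congrArg Matrix.det hLS
    simp only [Matrix.det_mul, Matrix.det_fromBlocks_zero₂₁, Matrix.det_fromBlocks_zero₁₂,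
      Matrix.det_smul, Matrix.det_one, mul_one, one_mul, hsub, Matrix.det_neg, hmap] at hdet1
    rw [← hn] at hdet1
    rw [hdet1]; ring
  have hQdet : Q.det = (-1) ^ n * sact Φ.det * Φ.det := hregpow n _ _ key
  have hQunit : IsUnit Q.det := by
    rw [hQdet]
    exact ((isUnit_one.neg.pow n).mul (hΦunit.map (sact : R →+* R))).mul hΦunit
  -- transfer to G
  have hPmat : LinearMap.toMatrix bN bN.dualBasis
      (G : N →ₗ[R] Module.Dual R N) = Matrix.transpose Q := by
    ext p q
    rw [LinearMap.toMatrix_apply]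
    simp [hQ, Matrix.transpose_apply]
  have hPunit : IsUnit (LinearMap.toMatrix bN bN.dualBasis
      (G : N →ₗ[R] Module.Dual R N)).det := by
    rw [hPmat, Matrix.det_transpose]; exact hQunit
  set P := LinearMap.toMatrix bN bN.dualBasis (G : N →ₗ[R] Module.Dual R N) with hP
  have : Invertible P := P.invertibleOfIsUnitDet hPunit
  have hGeq : (G : N →ₗ[R] Module.Dual R N) = Matrix.toLin bN bN.dualBasis P :=
    (Matrix.toLin_toMatrix bN bN.dualBasis G).symm
  have hbij : Function.Bijective ⇑(Matrix.toLin bN bN.dualBasis P) := by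
    constructor
    · intro x y hxy
      have h2 := congrArg (⇑(Matrix.toLin bN.dualBasis bN ⅟P)) hxy
      rwa [← Matrix.toLin_mul_apply, ← Matrix.toLin_mul_apply, invOf_mul_self,
        Matrix.toLin_one, LinearMap.id_apply, LinearMap.id_apply] at h2
    · intro y
      exact ⟨Matrix.toLin bN.dualBasis bN ⅟P y, by
        rw [← Matrix.toLin_mul_apply, mul_invOf_self, Matrix.toLin_one, LinearMap.id_apply]⟩
  show Function.Bijective ⇑(G : N →ₗ[R] Module.Dual R N)
  rw [hGeq]
  exact hbij
end

section
/- Let zero be replaced as follows: suppose B is an ℝ-bimodule situation where xs < x, so B_x B_s ≅ B_x(1) ⊕ B_x(-1), and left multiplication by ρ on \overline{B_x} satisfies hard Lefschetz. Then for ζ > 0 the operator L_ζ on \overline{B_x B_s} = \overline{B_x}(1) ⊕ \overline{B_x}(-1), given in matrix form by diagonal entries ρ·(-) and lower-left entry the scalar ζρ(α_s^∨)·id : \overline{B_x}(1) → \overline{B_x}(-1), satisfies hard Lefschetz: L_ζ^i : (\overline{B_x B_s})^{-i} → (\overline{B_x B_s})^i is an isomorphism for all i ≥ 0. -/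
section Aux

variable {V : Type} [AddCommGroup V] [Module ℝ V]

lemma aux_mem_pow_deg (p : ℤ → Submodule ℝ V) (e : Module.End ℝ V)
    (hdeg : ∀ i : ℤ, ∀ x ∈ p i, e x ∈ p (i + 2))
    (k : ℕ) (j : ℤ) (x : V) (hx : x ∈ p j) : (e ^ k) x ∈ p (j + 2 * k) := by
  induction k with
  | zero => simpa using hx
  | succ n ih =>
      rw [pow_succ', Module.End.mul_apply,
        show (j + 2 * ((n + 1 : ℕ) : ℤ)) = j + 2 * n + 2 by push_cast; ring]
      exact hdeg _ _ ih

lemma aux_apply_pow (e : Module.End ℝ V) (k : ℕ) (z : V) :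
    (e ^ k) (e z) = (e ^ (k + 1)) z := by
  rw [pow_succ, Module.End.mul_apply]

lemma aux_pow_apply (e : Module.End ℝ V) (k : ℕ) (z : V) :
    e ((e ^ k) z) = (e ^ (k + 1)) z := by
  rw [pow_succ', Module.End.mul_apply]

lemma aux_Lpow_succ (e : Module.End ℝ V) (c : ℝ) (n : ℕ) (x y : V) :
    ((LinearMap.prod (e ∘ₗ LinearMap.fst ℝ V V)
        (c • LinearMap.fst ℝ V V + e ∘ₗ LinearMap.snd ℝ V V)) ^ (n + 1)) (x, y)
      = ((e ^ (n + 1)) x,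
         (e ^ (n + 1)) y + (((n : ℝ) + 1) * c) • (e ^ n) x) := by
  have h1 : ∀ u v : V, (LinearMap.prod (e ∘ₗ LinearMap.fst ℝ V V)
      (c • LinearMap.fst ℝ V V + e ∘ₗ LinearMap.snd ℝ V V)) (u, v)
      = (e u, c • u + e v) := by
    intro u v; simp [LinearMap.prod_apply]
  induction n generalizing x y with
  | zero => simp [h1, add_comm]
  | succ m ih =>
      rw [pow_succ', Module.End.mul_apply, ih, h1]
      refine Prod.ext (aux_pow_apply e (m + 1) x) ?_
      simp only [map_add, map_smul, aux_pow_apply]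
      push_cast
      module

end Aux

/-- **Hard Lefschetz for `L_ζ` when `xs < x` (abstract form).**  Let `V` be a graded
finite-dimensional real vector space with a degree-2 operator `e` satisfying hard
Lefschetz.  Form `V(1) ⊕ V(-1)` (so the degree-`i` piece is `V^{i+1} × V^{i-1}`) and the
operator `L = [[e, 0], [c·id, e]]` with `c > 0`.  Then
`L^i : (V(1) ⊕ V(-1))^{-i} → (V(1) ⊕ V(-1))^i` is an isomorphism for all `i ≥ 0`.
(This is the statement that for `ζ > 0` and `xs < x`, the operator `L_ζ` on
`\overline{B_x B_s} ≅ \overline{B_x}(1) ⊕ \overline{B_x}(-1)`, with diagonal entries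
left multiplication by `ρ` and lower-left entry the scalar `ζ ρ(α_s^∨)`, satisfies hard
Lefschetz, given that left multiplication by `ρ` satisfies hard Lefschetz on
`\overline{B_x}`.) -/
theorem hard_lefschetz_deformed_descent
    (V : Type) [AddCommGroup V] [Module ℝ V] [FiniteDimensional ℝ V]
    (p : ℤ → Submodule ℝ V) (hp : DirectSum.IsInternal p)
    (e : Module.End ℝ V)
    (hdeg : ∀ i : ℤ, ∀ x ∈ p i, e x ∈ p (i + 2))
    (hHL : ∀ i : ℕ,
      (∀ x ∈ p (-(i : ℤ)), (e ^ i) x = 0 → x = 0) ∧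
      (∀ y ∈ p (i : ℤ), ∃ x ∈ p (-(i : ℤ)), (e ^ i) x = y))
    (c : ℝ) (hc : 0 < c) :
    ∀ i : ℕ,
      (∀ x ∈ ((p (-(i : ℤ) + 1)).prod (p (-(i : ℤ) - 1)) : Submodule ℝ (V × V)),
        ((LinearMap.prod (e ∘ₗ LinearMap.fst ℝ V V)
            (c • LinearMap.fst ℝ V V + e ∘ₗ LinearMap.snd ℝ V V) ^ i)) x = 0 → x = 0) ∧
      (∀ y ∈ ((p ((i : ℤ) + 1)).prod (p ((i : ℤ) - 1)) : Submodule ℝ (V × V)),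
        ∃ x ∈ ((p (-(i : ℤ) + 1)).prod (p (-(i : ℤ) - 1)) : Submodule ℝ (V × V)),
          ((LinearMap.prod (e ∘ₗ LinearMap.fst ℝ V V)
            (c • LinearMap.fst ℝ V V + e ∘ₗ LinearMap.snd ℝ V V) ^ i)) x = y) := by
  intro i
  match i with
  | 0 =>
      constructor
      · intro x _ h
        simpa using h
      · intro y hy
        refine ⟨y, by simpa using hy, by simp⟩
  | (n + 1) =>
      set k : ℝ := ((n : ℝ) + 1) * c with hkdef
      have hk : k ≠ 0 := by positivity
      have hA : (-((n + 1 : ℕ) : ℤ) + 1) = -((n : ℕ) : ℤ) := by push_cast; ring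
      have hB : (-((n + 1 : ℕ) : ℤ) - 1) = -(((n + 2 : ℕ)) : ℤ) := by push_cast; ring
      have hC : (((n + 1 : ℕ) : ℤ) + 1) = (((n + 2 : ℕ)) : ℤ) := by push_cast; ring
      have hD : (((n + 1 : ℕ) : ℤ) - 1) = ((n : ℕ) : ℤ) := by push_cast; ring
      constructor
      · rintro ⟨x, y⟩ hmem h0
        rw [Submodule.mem_prod] at hmem
        obtain ⟨hx, hy⟩ := hmem
        rw [hA] at hx
        rw [hB] at hy
        rw [aux_Lpow_succ, Prod.ext_iff] at h0
        obtain ⟨h1, h2⟩ := h0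
        simp only [Prod.fst_zero, Prod.snd_zero] at h1 h2
        have h4 : (e ^ (n + 2)) y = 0 := by
          have h3 := congrArg e h2
          simp only [map_add, map_smul, aux_pow_apply, map_zero] at h3
          rw [show n + 1 + 1 = n + 2 from rfl, h1, smul_zero, add_zero] at h3
          exact h3
        have hy0 : y = 0 := (hHL (n + 2)).1 y hy h4
        have h5 : (e ^ n) x = 0 := by
          rw [hy0, map_zero, zero_add] at h2
          exact (smul_eq_zero.mp h2).resolve_left hk
        have hx0 : x = 0 := (hHL n).1 x hx h5
        simp [hx0, hy0, Prod.ext_iff]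
      · rintro ⟨u, v⟩ hmem
        rw [Submodule.mem_prod] at hmem
        obtain ⟨hu, hv⟩ := hmem
        rw [hC] at hu
        rw [hD] at hv
        obtain ⟨z, hz, hz2⟩ := (hHL (n + 2)).2 u hu
        have hez : (e ^ (n + 1)) z ∈ p ((n : ℕ) : ℤ) := by
          have := aux_mem_pow_deg p e hdeg (n + 1) _ z hz
          rwa [show (-(((n + 2 : ℕ)) : ℤ) + 2 * ((n + 1 : ℕ) : ℤ)) = ((n : ℕ) : ℤ) by
            push_cast; ring] at this
        set w : V := v - k • (e ^ (n + 1)) z with hwdef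
        have hwmem : w ∈ p ((n : ℕ) : ℤ) := sub_mem hv (Submodule.smul_mem _ _ hez)
        have hew : e w ∈ p (((n + 2 : ℕ)) : ℤ) := by
          have := hdeg _ _ hwmem
          rwa [show ((n : ℕ) : ℤ) + 2 = (((n + 2 : ℕ)) : ℤ) by push_cast; ring] at this
        obtain ⟨z', hz', hz'2⟩ := (hHL (n + 2)).2 (e w) hew
        have ha : (e ^ (n + 1)) z' ∈ p ((n : ℕ) : ℤ) := by
          have := aux_mem_pow_deg p e hdeg (n + 1) _ z' hz'
          rwa [show (-(((n + 2 : ℕ)) : ℤ) + 2 * ((n + 1 : ℕ) : ℤ)) = ((n : ℕ) : ℤ) by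
            push_cast; ring] at this
        have heb : e (w - (e ^ (n + 1)) z') = 0 := by
          rw [map_sub, aux_pow_apply, show n + 1 + 1 = n + 2 from rfl, hz'2, sub_self]
        have hbmem : k⁻¹ • (w - (e ^ (n + 1)) z') ∈ p ((n : ℕ) : ℤ) :=
          Submodule.smul_mem _ _ (sub_mem hwmem ha)
        obtain ⟨x', hx', hx'2⟩ := (hHL n).2 _ hbmem
        have hezmem : e z ∈ p (-((n : ℕ) : ℤ)) := by
          have := hdeg _ _ hz
          rwa [show (-(((n + 2 : ℕ)) : ℤ) + 2) = -((n : ℕ) : ℤ) by push_cast; ring] at this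
        refine ⟨(e z + x', z'), ?_, ?_⟩
        · rw [Submodule.mem_prod, hA, hB]
          exact ⟨add_mem hezmem hx', hz'⟩
        · rw [aux_Lpow_succ]
          have e1 : (e ^ (n + 1)) (e z + x') = u := by
            rw [map_add, aux_apply_pow, show n + 1 + 1 = n + 2 from rfl, hz2]
            have : (e ^ (n + 1)) x' = 0 := by
              rw [show n + 1 = n + 1 from rfl, ← aux_pow_apply, hx'2, map_smul, heb,
                smul_zero]
            rw [this, add_zero]
          have e2 : (e ^ (n + 1)) z' + k • (e ^ n) (e z + x') = v := by
            rw [map_add, aux_apply_pow, hx'2, smul_add, smul_smul,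
              mul_inv_cancel₀ hk, one_smul]
            rw [hwdef]
            abel
          rw [e1, e2]
end

section
/- Consider the block symmetric matrix M = [[A, J, B],[Jᵀ, 0, 0],[Bᵀ, 0, Q]] over ℝ, where J is a non-degenerate (square) matrix and Q is symmetric. Then M is non-degenerate if and only if Q is non-degenerate, and in that case the signature of M equals the signature of Q. -/
open Matrix
/-- The maximal dimension of a subspace on which the quadratic form of `M` is positive. -/
noncomputable def matPosIndex {ι : Type} [Fintype ι] (M : Matrix ι ι ℝ) : ℕ :=
  sSup {d : ℕ | ∃ T : Submodule ℝ (ι → ℝ), Module.finrank ℝ T = d ∧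
    ∀ x ∈ T, x ≠ 0 → 0 < x ⬝ᵥ M.mulVec x}

/-- The maximal dimension of a subspace on which the quadratic form of `M` is negative. -/
noncomputable def matNegIndex {ι : Type} [Fintype ι] (M : Matrix ι ι ℝ) : ℕ :=
  sSup {d : ℕ | ∃ T : Submodule ℝ (ι → ℝ), Module.finrank ℝ T = d ∧
    ∀ x ∈ T, x ≠ 0 → x ⬝ᵥ M.mulVec x < 0}

/-- The signature of a symmetric real matrix: the number of positive eigenvalues minus
the number of negative eigenvalues. -/
noncomputable def matSignature {ι : Type} [Fintype ι] (M : Matrix ι ι ℝ) : ℤ :=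
  (matPosIndex M : ℤ) - (matNegIndex M : ℤ)

namespace BlockSig

variable {ι : Type} [Fintype ι]

/-- The set of dimensions of subspaces on which the quadratic form satisfies `p`. -/
def idxSet (p : ℝ → Prop) (M : Matrix ι ι ℝ) : Set ℕ :=
  {d : ℕ | ∃ T : Submodule ℝ (ι → ℝ), Module.finrank ℝ T = d ∧
    ∀ x ∈ T, x ≠ 0 → p (x ⬝ᵥ M.mulVec x)}

lemma matPosIndex_eq (M : Matrix ι ι ℝ) : matPosIndex M = sSup (idxSet (fun r => 0 < r) M) := rfl

lemma matNegIndex_eq (M : Matrix ι ι ℝ) : matNegIndex M = sSup (idxSet (fun r => r < 0) M) := rfl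

lemma quad_congr [DecidableEq ι] (P M : Matrix ι ι ℝ) (x : ι → ℝ) :
    x ⬝ᵥ (Pᵀ * M * P).mulVec x = (P.mulVec x) ⬝ᵥ M.mulVec (P.mulVec x) := by
  rw [← mulVec_mulVec, ← mulVec_mulVec, dotProduct_mulVec x Pᵀ, vecMul_transpose]

lemma idxSet_congr_subset [DecidableEq ι] (p : ℝ → Prop) (M P : Matrix ι ι ℝ)
    (hP : IsUnit P.det) : idxSet p M ⊆ idxSet p (Pᵀ * M * P) := by
  rintro d ⟨T, rfl, hT⟩
  have hinj : Function.Injective ((P⁻¹).mulVecLin) := by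
    intro a b hab
    have := congrArg (P.mulVecLin) hab
    simpa [mulVec_mulVec, Matrix.mul_nonsing_inv P hP] using this
  refine ⟨T.map ((P⁻¹).mulVecLin), ?_, ?_⟩
  · exact ((Submodule.equivMapOfInjective _ hinj T).finrank_eq).symm
  · rintro x ⟨y, hy, rfl⟩ hx0
    rw [quad_congr]
    have hPy : P.mulVec ((P⁻¹).mulVecLin y) = y := by
      simp [mulVec_mulVec, Matrix.mul_nonsing_inv P hP]
    rw [hPy]
    refine hT y hy ?_
    rintro rfl
    simp at hx0

lemma idxSet_congr [DecidableEq ι] (p : ℝ → Prop) (M P : Matrix ι ι ℝ)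
    (hP : IsUnit P.det) : idxSet p (Pᵀ * M * P) = idxSet p M := by
  have hP' : IsUnit (P⁻¹).det := P.isUnit_nonsing_inv_det hP
  have key : (P⁻¹)ᵀ * (Pᵀ * M * P) * P⁻¹ = M := by
    rw [Matrix.transpose_nonsing_inv]
    calc (Pᵀ)⁻¹ * (Pᵀ * M * P) * P⁻¹ = (Pᵀ)⁻¹ * Pᵀ * M * (P * P⁻¹) := by
          noncomm_ring
      _ = M := by
          rw [Matrix.nonsing_inv_mul _ (by simpa using hP), Matrix.mul_nonsing_inv _ hP,
            one_mul, mul_one]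
  refine Set.Subset.antisymm ?_ (idxSet_congr_subset p M P hP)
  have := idxSet_congr_subset p (Pᵀ * M * P) (P⁻¹) hP'
  rwa [key] at this

lemma matSignature_congr [DecidableEq ι] (M P : Matrix ι ι ℝ) (hP : IsUnit P.det) :
    matSignature (Pᵀ * M * P) = matSignature M := by
  unfold matSignature
  rw [matPosIndex_eq, matPosIndex_eq, matNegIndex_eq, matNegIndex_eq,
    idxSet_congr _ _ _ hP, idxSet_congr _ _ _ hP]

lemma quad_diagonal [DecidableEq ι] (d : ι → ℝ) (x : ι → ℝ) :
    x ⬝ᵥ (diagonal d).mulVec x = ∑ i, d i * (x i * x i) := by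
  simp only [dotProduct, mulVec_diagonal]
  exact Finset.sum_congr rfl fun i _ => by ring

open Classical in
lemma matPosIndex_diagonal [DecidableEq ι] (d : ι → ℝ) :
    matPosIndex (diagonal d) = (Finset.univ.filter fun i => 0 < d i).card := by
  classical
  set c := (Finset.univ.filter fun i => 0 < d i).card with hc
  let ℓ : ({i // 0 < d i} → ℝ) →ₗ[ℝ] (ι → ℝ) :=
    { toFun := fun y i => if h : 0 < d i then y ⟨i, h⟩ else 0,
      map_add' := by intro a b; funext i; by_cases h : 0 < d i <;> simp [h]
      map_smul' := by intro a b; funext i; by_cases h : 0 < d i <;> simp [h] }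
  have hℓ : Function.Injective ℓ := by
    rw [← LinearMap.ker_eq_bot, LinearMap.ker_eq_bot']
    intro y hy
    funext i
    have := congrFun hy i.1
    simpa [ℓ, i.2] using this
  have hcard : Fintype.card {i // 0 < d i} = c := by
    rw [hc, Fintype.card_subtype]
  have hmem : c ∈ idxSet (fun r => 0 < r) (diagonal d) := by
    refine ⟨LinearMap.range ℓ, ?_, ?_⟩
    · rw [LinearMap.finrank_range_of_inj hℓ, Module.finrank_pi, hcard]
    · rintro x ⟨y, rfl⟩ hx0
      rw [quad_diagonal]
      refine Finset.sum_pos' (fun i _ => ?_) ?_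
      · by_cases h : 0 < d i
        · exact mul_nonneg h.le (mul_self_nonneg _)
        · simp [ℓ, h]
      · obtain ⟨i, hi⟩ := Function.ne_iff.mp hx0
        have hdi : 0 < d i := by
          by_contra h
          exact hi (by simp [ℓ, h])
        exact ⟨i, Finset.mem_univ i, mul_pos hdi (mul_self_pos.mpr hi)⟩
  have hub : ∀ m ∈ idxSet (fun r => 0 < r) (diagonal d), m ≤ c := by
    rintro m ⟨T, rfl, hT⟩
    let π : T →ₗ[ℝ] ({i // 0 < d i} → ℝ) :=
      LinearMap.pi (fun i => (LinearMap.proj i.1).comp T.subtype)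
    have hπ : Function.Injective π := by
      rw [← LinearMap.ker_eq_bot, LinearMap.ker_eq_bot']
      intro x hx
      have hx' : ∀ i : ι, 0 < d i → (x : ι → ℝ) i = 0 := by
        intro i hi
        have := congrFun hx ⟨i, hi⟩
        simpa [π] using this
      by_contra hne
      have hxne : (x : ι → ℝ) ≠ 0 := fun h => hne (Subtype.ext h)
      have hpos := hT x.1 x.2 hxne
      rw [quad_diagonal] at hpos
      have : ∑ i, d i * ((x : ι → ℝ) i * (x : ι → ℝ) i) ≤ 0 := by
        refine Finset.sum_nonpos fun i _ => ?_
        by_cases h : 0 < d i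
        · rw [hx' i h]; simp
        · exact mul_nonpos_of_nonpos_of_nonneg (le_of_not_gt h) (mul_self_nonneg _)
      linarith
    calc Module.finrank ℝ T ≤ Module.finrank ℝ ({i // 0 < d i} → ℝ) :=
          LinearMap.finrank_le_finrank_of_injective hπ
      _ = c := by rw [Module.finrank_pi, hcard]
  exact le_antisymm (csSup_le ⟨c, hmem⟩ hub) (le_csSup ⟨c, fun m hm => hub m hm⟩ hmem)

lemma idxSet_neg (M : Matrix ι ι ℝ) :
    idxSet (fun r => r < 0) M = idxSet (fun r => 0 < r) (-M) := by
  have h : ∀ x : ι → ℝ, x ⬝ᵥ (-M).mulVec x = -(x ⬝ᵥ M.mulVec x) := by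
    intro x; simp [Matrix.neg_mulVec]
  ext dd
  constructor
  · rintro ⟨T, hT, hq⟩
    exact ⟨T, hT, fun x hx h0 => by rw [h]; exact neg_pos.mpr (hq x hx h0)⟩
  · rintro ⟨T, hT, hq⟩
    refine ⟨T, hT, fun x hx h0 => ?_⟩
    have := hq x hx h0
    rw [h] at this
    linarith

open Classical in
lemma matNegIndex_diagonal [DecidableEq ι] (d : ι → ℝ) :
    matNegIndex (diagonal d) = (Finset.univ.filter fun i => d i < 0).card := by
  classical
  rw [matNegIndex_eq, idxSet_neg, Matrix.diagonal_neg, ← matPosIndex_eq,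
    matPosIndex_diagonal]
  congr 1
  apply Finset.filter_congr
  intro i _
  simp [neg_pos]

lemma fromColumns_add' {R : Type*} [Semiring R] {m n₁ n₂ : Type*}
    (A₁ : Matrix m n₁ R) (A₂ : Matrix m n₂ R) (B₁ : Matrix m n₁ R) (B₂ : Matrix m n₂ R) :
    fromCols A₁ A₂ + fromCols B₁ B₂ = fromCols (A₁ + B₁) (A₂ + B₂) := by
  ext i (j | j) <;> simp [fromCols_apply_inl, fromCols_apply_inr]

lemma fromRows_add' {R : Type*} [Semiring R] {m₁ m₂ n : Type*}
    (A₁ : Matrix m₁ n R) (A₂ : Matrix m₂ n R) (B₁ : Matrix m₁ n R) (B₂ : Matrix m₂ n R) :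
    fromRows A₁ A₂ + fromRows B₁ B₂ = fromRows (A₁ + B₁) (A₂ + B₂) := by
  ext (i | i) j <;> simp [fromRows_apply_inl, fromRows_apply_inr]

lemma fromColumns_fromRows_zero {R : Type*} [Semiring R] {m₁ m₂ n₁ n₂ : Type*}
    (B₁₁ : Matrix m₁ n₁ R) (B₂₁ : Matrix m₂ n₁ R) :
    fromCols (fromRows B₁₁ B₂₁) (0 : Matrix (m₁ ⊕ m₂) n₂ R) = fromBlocks B₁₁ 0 B₂₁ 0 := by
  rw [← fromRows_zero, fromCols_fromRows_eq_fromBlocks]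

lemma fromRows_fromColumns_zero {R : Type*} [Semiring R] {m₁ m₂ n₁ n₂ : Type*}
    (B₁₁ : Matrix m₁ n₁ R) (B₁₂ : Matrix m₁ n₂ R) :
    fromRows (fromCols B₁₁ B₁₂) (0 : Matrix m₂ (n₁ ⊕ n₂) R) = fromBlocks B₁₁ B₁₂ 0 0 := by
  rw [← fromCols_zero, fromRows_fromCols_eq_fromBlocks]

lemma fromBlocks_sub' {R : Type*} [Ring R] {m₁ m₂ n₁ n₂ : Type*}
    (A : Matrix m₁ n₁ R) (B : Matrix m₁ n₂ R) (C : Matrix m₂ n₁ R) (D : Matrix m₂ n₂ R)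
    (A' : Matrix m₁ n₁ R) (B' : Matrix m₁ n₂ R) (C' : Matrix m₂ n₁ R) (D' : Matrix m₂ n₂ R) :
    fromBlocks A B C D - fromBlocks A' B' C' D' =
      fromBlocks (A - A') (B - B') (C - C') (D - D') := by
  rw [sub_eq_add_neg, Matrix.fromBlocks_neg, Matrix.fromBlocks_add]
  simp [sub_eq_add_neg]

end BlockSig

/-- **Block-matrix signature lemma.**  Consider the symmetric block matrix
`M = [[A, J, B], [Jᵀ, 0, 0], [Bᵀ, 0, Q]]` over `ℝ` with `J` invertible and `A`, `Q`
symmetric.  Then `M` is non-degenerate iff `Q` is, and in that case the signature of `M`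
equals the signature of `Q`. -/
theorem block_matrix_signature
    {n k : Type} [Fintype n] [Fintype k] [DecidableEq n] [DecidableEq k]
    (A : Matrix n n ℝ) (hA : A.IsSymm)
    (J : Matrix n n ℝ) (hJ : IsUnit J.det)
    (Bm : Matrix n k ℝ)
    (Q : Matrix k k ℝ) (hQ : Q.IsSymm) :
    ((Matrix.fromBlocks A (Matrix.fromCols J Bm)
        (Matrix.fromRows Jᵀ Bmᵀ) (Matrix.fromBlocks 0 0 0 Q)).det ≠ 0 ↔ Q.det ≠ 0) ∧
    (Q.det ≠ 0 →
      matSignature (Matrix.fromBlocks A (Matrix.fromCols J Bm)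
        (Matrix.fromRows Jᵀ Bmᵀ) (Matrix.fromBlocks 0 0 0 Q)) = matSignature Q) := by
  classical
  open BlockSig in
  -- spectral data for Q
  have hQh : Q.IsHermitian := by
    rw [Matrix.IsHermitian, Matrix.conjTranspose_eq_transpose_of_trivial]; exact hQ
  set U : Matrix k k ℝ := (hQh.eigenvectorUnitary : Matrix k k ℝ) with hU
  set ev : k → ℝ := hQh.eigenvalues with hev
  have hUQU : Uᵀ * Q * U = Matrix.diagonal ev := by
    have := hQh.conjStarAlgAut_star_eigenvectorUnitary
    rw [Unitary.conjStarAlgAut_star_apply] at this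
    rw [Matrix.star_eq_conjTranspose, Matrix.conjTranspose_eq_transpose_of_trivial] at this
    simpa [RCLike.ofReal_real_eq_id] using this
  have hUU : Uᵀ * U = 1 := by
    have := (Matrix.mem_unitaryGroup_iff').mp hQh.eigenvectorUnitary.2
    rwa [Matrix.star_eq_conjTranspose, Matrix.conjTranspose_eq_transpose_of_trivial] at this
  have hUdet : IsUnit U.det := by
    refine IsUnit.of_mul_eq_one (Uᵀ.det) ?_
    rw [mul_comm, ← Matrix.det_mul, hUU, Matrix.det_one]
  -- determinant of diagonal ev equals det Q
  have hdet_ev : Matrix.det (Matrix.diagonal ev) = Q.det := by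
    rw [← hUQU, Matrix.det_mul, Matrix.det_mul, Matrix.det_transpose]
    have h1 : U.det * U.det ≠ 0 → True := fun _ => trivial
    have : U.det * U.det = Uᵀ.det * U.det := by rw [Matrix.det_transpose]
    calc U.det * Q.det * U.det = Q.det * (Uᵀ.det * U.det) := by
          rw [Matrix.det_transpose]; ring
      _ = Q.det := by rw [← Matrix.det_mul, hUU, Matrix.det_one, mul_one]
  -- auxiliary matrices
  set Cm : Matrix n n ℝ := J⁻¹ * ((2⁻¹ : ℝ) • A) with hCm
  set Dm : Matrix n k ℝ := J⁻¹ * Bm with hDm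
  have hJC : J * Cm = (2⁻¹ : ℝ) • A := by
    rw [hCm, ← Matrix.mul_assoc, Matrix.mul_nonsing_inv _ hJ, Matrix.one_mul]
  have hJD : J * Dm = Bm := by
    rw [hDm, ← Matrix.mul_assoc, Matrix.mul_nonsing_inv _ hJ, Matrix.one_mul]
  have hCJ : Cmᵀ * Jᵀ = (2⁻¹ : ℝ) • A := by
    rw [← Matrix.transpose_mul, hJC, Matrix.transpose_smul, hA.eq]
  have hDJ : Dmᵀ * Jᵀ = Bmᵀ := by rw [← Matrix.transpose_mul, hJD]
  have hhalf : (2⁻¹ : ℝ) • A + (2⁻¹ : ℝ) • A = A := by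
    rw [← add_smul]; norm_num
  set Mfull : Matrix (n ⊕ (n ⊕ k)) (n ⊕ (n ⊕ k)) ℝ :=
    fromBlocks A (fromCols J Bm) (fromRows Jᵀ Bmᵀ) (fromBlocks 0 0 0 Q) with hMfull
  set N : Matrix (n ⊕ (n ⊕ k)) (n ⊕ (n ⊕ k)) ℝ :=
    fromBlocks 0 (fromCols J 0) (fromRows Jᵀ 0) (fromBlocks 0 0 0 Q) with hNdef
  set N₂ : Matrix (n ⊕ (n ⊕ k)) (n ⊕ (n ⊕ k)) ℝ :=
    fromBlocks 0 (fromCols 1 0) (fromRows 1 0) (fromBlocks 0 0 0 Q) with hN₂def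
  set P₁ : Matrix (n ⊕ (n ⊕ k)) (n ⊕ (n ⊕ k)) ℝ :=
    fromBlocks 1 0 (fromRows Cm (0 : Matrix k n ℝ)) (fromBlocks 1 Dm 0 1) with hP₁def
  set P₂ : Matrix (n ⊕ (n ⊕ k)) (n ⊕ (n ⊕ k)) ℝ :=
    fromBlocks Jᵀ 0 0 1 with hP₂def
  set G : Matrix (n ⊕ (n ⊕ k)) (n ⊕ (n ⊕ k)) ℝ :=
    fromBlocks 1 (fromCols 1 0) (fromRows 1 0) (fromBlocks (-1) 0 0 U) with hGdef
  set dvec : n ⊕ (n ⊕ k) → ℝ :=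
    Sum.elim (fun _ => (2 : ℝ)) (Sum.elim (fun _ => (-2 : ℝ)) ev) with hdvec
  -- the three congruence identities
  have hM : P₁ᵀ * N * P₁ = Mfull := by
    rw [hP₁def, hNdef, hMfull]
    simp only [fromBlocks_transpose, transpose_fromRows, transpose_fromCols, transpose_one,
      transpose_zero, fromBlocks_multiply, fromRows_mul, mul_fromCols,
      fromCols_mul_fromRows, fromRows_mul_fromCols, fromCols_mul_fromBlocks,
      fromBlocks_mul_fromRows, Matrix.mul_one, Matrix.one_mul, Matrix.mul_zero, Matrix.zero_mul,
      add_zero, zero_add, hJC, hJD, hCJ, hDJ, fromRows_zero, fromCols_zero]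
    rw [hhalf]
  have hN : P₂ᵀ * N₂ * P₂ = N := by
    rw [hP₂def, hN₂def, hNdef]
    simp only [fromBlocks_transpose, transpose_transpose, transpose_one, transpose_zero,
      fromBlocks_multiply, fromRows_mul, mul_fromCols, fromCols_mul_fromRows,
      fromRows_mul_fromCols, fromCols_mul_fromBlocks, fromBlocks_mul_fromRows,
      Matrix.mul_one, Matrix.one_mul, Matrix.mul_zero, Matrix.zero_mul,
      add_zero, zero_add, fromRows_zero, fromCols_zero]
  have hG : Gᵀ * N₂ * G = Matrix.diagonal dvec := by
    have h2 : (1 : Matrix n n ℝ) + 1 = Matrix.diagonal (fun _ => 2) := by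
      rw [← Matrix.diagonal_one, Matrix.diagonal_add]
      congr 1; funext _; norm_num
    have hm2 : (-1 : Matrix n n ℝ) + -1 = Matrix.diagonal (fun _ => -2) := by
      have h1 : (-1 : Matrix n n ℝ) = Matrix.diagonal (fun _ => -1) := by
        rw [← Matrix.diagonal_one, Matrix.diagonal_neg]
      rw [h1, Matrix.diagonal_add]
      congr 1; funext _; norm_num
    have hQU : Uᵀ * (Q * U) = Matrix.diagonal ev := by rw [← Matrix.mul_assoc]; exact hUQU
    rw [hGdef, hN₂def, hdvec, ← fromBlocks_diagonal, ← fromBlocks_diagonal]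
    simp only [fromBlocks_transpose, transpose_fromRows, transpose_fromCols, transpose_one,
      transpose_zero, transpose_neg,
      fromBlocks_multiply, fromRows_mul, mul_fromCols, fromCols_mul_fromRows,
      fromRows_mul_fromCols, fromCols_mul_fromBlocks, fromBlocks_mul_fromRows,
      Matrix.mul_one, Matrix.one_mul, Matrix.mul_zero, Matrix.zero_mul, Matrix.mul_neg,
      Matrix.neg_mul, neg_neg, add_zero, zero_add, fromRows_zero, fromCols_zero,
      BlockSig.fromColumns_add', BlockSig.fromRows_add', BlockSig.fromColumns_fromRows_zero,
      BlockSig.fromRows_fromColumns_zero, fromBlocks_add, h2, hm2, hQU, hUQU,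
      neg_add_cancel, add_neg_cancel]
  -- determinants of the congruence matrices
  have hdetP₁ : P₁.det = 1 := by
    rw [hP₁def, Matrix.det_fromBlocks_zero₁₂, Matrix.det_fromBlocks_zero₂₁]
    simp
  have hdetP₂ : IsUnit P₂.det := by
    rw [hP₂def, Matrix.det_fromBlocks_zero₁₂, Matrix.det_one, mul_one, Matrix.det_transpose]
    exact hJ
  have hdetG : IsUnit G.det := by
    have hm2 : (-1 : Matrix n n ℝ) - 1 = (-2 : ℝ) • 1 := by
      ext i j
      by_cases h : i = j <;> simp [Matrix.one_apply, h] <;> norm_num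
    rw [hGdef, Matrix.det_fromBlocks_one₁₁, fromRows_mul_fromCols]
    simp only [Matrix.mul_one, Matrix.one_mul, Matrix.mul_zero, Matrix.zero_mul,
      BlockSig.fromBlocks_sub', sub_zero, hm2]
    rw [Matrix.det_fromBlocks_zero₂₁, Matrix.det_smul, Matrix.det_one]
    exact (IsUnit.mul (by simp) hUdet)
  -- signature chain
  have hsig1 : matSignature Mfull = matSignature N := by
    rw [← hM]
    exact BlockSig.matSignature_congr N P₁ (by rw [hdetP₁]; exact isUnit_one)
  have hsig2 : matSignature N = matSignature N₂ := by
    rw [← hN]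
    exact BlockSig.matSignature_congr N₂ P₂ hdetP₂
  have hsig3 : matSignature (Matrix.diagonal dvec) = matSignature N₂ := by
    rw [← hG]
    exact BlockSig.matSignature_congr N₂ G hdetG
  have hsig4 : matSignature (Matrix.diagonal ev) = matSignature Q := by
    rw [← hUQU]
    exact BlockSig.matSignature_congr Q U hUdet
  -- counting for the diagonal matrix dvec
  have hposd : matPosIndex (Matrix.diagonal dvec) =
      Fintype.card n + (Finset.univ.filter fun i => 0 < ev i).card := by
    rw [BlockSig.matPosIndex_diagonal, Finset.card_filter, Fintype.sum_sum_type,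
      Fintype.sum_sum_type]
    simp only [hdvec, Sum.elim_inl, Sum.elim_inr]
    rw [Finset.card_filter]
    norm_num [Finset.card_univ]
  have hnegd : matNegIndex (Matrix.diagonal dvec) =
      Fintype.card n + (Finset.univ.filter fun i => ev i < 0).card := by
    rw [BlockSig.matNegIndex_diagonal, Finset.card_filter, Fintype.sum_sum_type,
      Fintype.sum_sum_type]
    simp only [hdvec, Sum.elim_inl, Sum.elim_inr]
    rw [Finset.card_filter]
    norm_num [Finset.card_univ]
  have hsigd : matSignature (Matrix.diagonal dvec) = matSignature (Matrix.diagonal ev) := by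
    unfold matSignature
    rw [hposd, hnegd, BlockSig.matPosIndex_diagonal, BlockSig.matNegIndex_diagonal]
    push_cast
    ring
  -- determinant chain
  have hdetM : Mfull.det = N₂.det * (P₂.det * P₂.det) := by
    rw [← hM, ← hN]
    rw [Matrix.det_mul, Matrix.det_mul, Matrix.det_mul, Matrix.det_mul,
      Matrix.det_transpose, Matrix.det_transpose, hdetP₁]
    ring
  have hdetD : (Matrix.diagonal dvec).det = N₂.det * (G.det * G.det) := by
    rw [← hG, Matrix.det_mul, Matrix.det_mul, Matrix.det_transpose]
    ring
  have hdvec_det : (Matrix.diagonal dvec).det =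
      (2 : ℝ) ^ Fintype.card n * (-2 : ℝ) ^ Fintype.card n * Q.det := by
    rw [Matrix.det_diagonal, ← hdet_ev, Matrix.det_diagonal, Fintype.prod_sum_type,
      Fintype.prod_sum_type]
    simp [hdvec]
    ring
  constructor
  · -- determinant part
    have h2n : (2 : ℝ) ^ Fintype.card n * (-2 : ℝ) ^ Fintype.card n ≠ 0 := by
      positivity
    constructor
    · intro hM0
      intro hQ0
      apply hM0
      rw [hdetM]
      have : (Matrix.diagonal dvec).det = 0 := by rw [hdvec_det, hQ0, mul_zero]
      rw [hdetD] at this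
      rcases mul_eq_zero.mp this with h | h
      · rw [h, zero_mul]
      · exact absurd h (by
          intro hcon
          rcases mul_eq_zero.mp hcon with h' | h'
          · exact hdetG.ne_zero h'
          · exact hdetG.ne_zero h')
    · intro hQ0 hM0
      apply hQ0
      have hD0 : (Matrix.diagonal dvec).det = 0 := by
        rw [hdetD]
        have hN₂0 : N₂.det = 0 := by
          rcases mul_eq_zero.mp (hdetM ▸ hM0) with h | h
          · exact h
          · exact absurd h (by
              intro hcon
              rcases mul_eq_zero.mp hcon with h' | h'
              · exact hdetP₂.ne_zero h'
              · exact hdetP₂.ne_zero h')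
        rw [hN₂0, zero_mul]
      rw [hdvec_det] at hD0
      rcases mul_eq_zero.mp hD0 with h | h
      · exact absurd h h2n
      · exact h
  · -- signature part
    intro _
    calc matSignature Mfull = matSignature N := hsig1
      _ = matSignature N₂ := hsig2
      _ = matSignature (Matrix.diagonal dvec) := hsig3.symm
      _ = matSignature (Matrix.diagonal ev) := hsigd
      _ = matSignature Q := hsig4
end
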